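/- arXiv:1307.6627 — 4 statements merged into one kernel-verified Lean document; each statement's English description precedes it below -/
import Mathlib

section
/- For every integer dimension d ≥ 1, every finite subset S of the integer lattice ℤ^d, and every point p ∈ S, the sum of Euclidean distances ∑_{x∈S} ‖p − x‖₂ is at least (|S| − 1)^{1+1/d}/4. Consequently, for any injective map f of a finite set V into ℤ^d, the pulled-back metric dist(u,v) = ‖f(u) − f(v)‖₂ satisfies the d-dimensional spreading constraints, so the spreading-metric LP is a relaxation of d-dimAP+. -/
open scoped BigOperators

/-- Euclidean distance between two points of the integer lattice `ℤ^d`. -/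
noncomputable def eDist {d : ℕ} (p q : Fin d → ℤ) : ℝ :=
  Real.sqrt (∑ i, ((p i : ℝ) - (q i : ℝ)) ^ 2)


namespace LatticeSpread


def iDist {d : ℕ} (p q : Fin d → ℤ) : ℕ :=
  Finset.univ.sup fun i => (p i - q i).natAbs

lemma eDist_nonneg {d : ℕ} (p q : Fin d → ℤ) : 0 ≤ eDist p q := Real.sqrt_nonneg _

lemma iDist_le_eDist {d : ℕ} (p q : Fin d → ℤ) : (iDist p q : ℝ) ≤ eDist p q := by
  rcases (Finset.univ : Finset (Fin d)).eq_empty_or_nonempty with h | h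
  · simp [iDist, h, eDist_nonneg]
  · obtain ⟨j, -, hj⟩ := Finset.exists_mem_eq_sup _ h fun i => (p i - q i).natAbs
    rw [iDist, hj]
    have h1 : (((p j - q j).natAbs : ℕ) : ℝ) = |((p j : ℝ) - q j)| := by
      rw [Nat.cast_natAbs]; push_cast; ring_nf
    rw [h1, ← Real.sqrt_sq_eq_abs]
    exact Real.sqrt_le_sqrt (Finset.single_le_sum (f := fun i => ((p i:ℝ) - q i)^2) (fun i _ => sq_nonneg _) (Finset.mem_univ j))

lemma count_le {d : ℕ} (p : Fin d → ℤ) (S : Finset (Fin d → ℤ)) (r : ℕ) :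
    (S.filter fun x => iDist p x ≤ r).card ≤ (2*r+1)^d := by
  have hsub : (S.filter fun x => iDist p x ≤ r) ⊆
      Finset.Icc (fun i => p i - r) (fun i => p i + r) := by
    intro x hx
    rw [Finset.mem_filter] at hx
    rw [Finset.mem_Icc]
    constructor <;> (rw [Pi.le_def]; intro i) <;>
    · have h2 : (p i - x i).natAbs ≤ r :=
        le_trans (Finset.le_sup (f := fun i => (p i - x i).natAbs) (Finset.mem_univ i)) hx.2
      omega
  calc (S.filter fun x => iDist p x ≤ r).card
      ≤ (Finset.Icc (fun i => p i - (r:ℤ)) (fun i => p i + r)).card := Finset.card_le_card hsub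
    _ = ∏ i : Fin d, (Finset.Icc (p i - (r:ℤ)) (p i + r)).card := Pi.card_Icc _ _
    _ = (2*r+1)^d := by
        have : ∀ i : Fin d, (Finset.Icc (p i - (r:ℤ)) (p i + r)).card = 2*r+1 := by
          intro i; rw [Int.card_Icc]; omega
        simp [this]

lemma layer_le_sum {d : ℕ} (p : Fin d → ℤ) (S : Finset (Fin d → ℤ)) (K : ℕ) :
    ∑ r ∈ Finset.range K, (S.filter fun x => r < iDist p x).card ≤ ∑ x ∈ S, iDist p x := by
  have h1 : ∀ r, (S.filter fun x => r < iDist p x).card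
      = ∑ x ∈ S, if r < iDist p x then 1 else 0 := fun r => Finset.card_filter _ _
  calc ∑ r ∈ Finset.range K, (S.filter fun x => r < iDist p x).card
      = ∑ x ∈ S, ∑ r ∈ Finset.range K, if r < iDist p x then 1 else 0 := by
        simp_rw [h1]; exact Finset.sum_comm
    _ ≤ ∑ x ∈ S, iDist p x := by
        refine Finset.sum_le_sum fun x _ => ?_
        rw [← Finset.card_filter]
        have hss : (Finset.range K).filter (fun r => r < iDist p x) ⊆
            Finset.range (iDist p x) := by
          intro r hr
          simp only [Finset.mem_filter, Finset.mem_range] at hr ⊢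
          exact hr.2
        simpa using Finset.card_le_card hss



lemma binom_gap (n : ℕ) (x : ℝ) (hx : 0 ≤ x) :
    2*(n+1)*x^n ≤ (x+1)^(n+1) - (x-1)^(n+1) := by
  have h1 : (x+1)^(n+1)
      = ∑ k ∈ Finset.range (n+2), x^k * 1^(n+1-k) * ((n+1).choose k) := add_pow x 1 (n+1)
  have h2 : (x-1)^(n+1)
      = ∑ k ∈ Finset.range (n+2), x^k * (-1)^(n+1-k) * ((n+1).choose k) := by
    rw [sub_eq_add_neg]; exact add_pow x (-1) (n+1)
  rw [h1, h2, ← Finset.sum_sub_distrib]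
  have key : ∀ k ∈ Finset.range (n+2),
      0 ≤ x^k * 1^(n+1-k) * ((n+1).choose k) - x^k * (-1)^(n+1-k) * ((n+1).choose k) := by
    intro k _
    rcases Nat.even_or_odd (n+1-k) with he | ho
    · rw [he.neg_one_pow, one_pow]; simp
    · rw [ho.neg_one_pow, one_pow]
      have : (0:ℝ) ≤ x^k * ((n+1).choose k) := by positivity
      nlinarith
  have hn : n ∈ Finset.range (n+2) := by simp only [Finset.mem_range]; omega
  have hsum := Finset.single_le_sum key hn
  refine le_trans (le_of_eq ?_) hsum
  have hch : ((n+1).choose n : ℝ) = (n+1 : ℝ) := by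
    rw [Nat.choose_succ_self_right]; push_cast; ring
  have he1 : n+1-n = 1 := by omega
  rw [he1, hch]; ring

lemma sum_odd_pow_le (d : ℕ) (e : ℕ) :
    ∑ r ∈ Finset.range e, (2*(r:ℝ)+1)^d ≤ (2*(e:ℝ))^(d+1) / (2*((d:ℝ)+1)) := by
  induction e with
  | zero => simp
  | succ e ih =>
    rw [Finset.sum_range_succ]
    have hb := binom_gap d (2*(e:ℝ)+1) (by positivity)
    have hd1 : (0:ℝ) < 2*((d:ℝ)+1) := by positivity
    rw [le_div_iff₀ hd1] at ih ⊢
    have h1 : (2*(e:ℝ)+1) + 1 = 2*((e:ℝ)+1) := by ring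
    have h2 : (2*(e:ℝ)+1) - 1 = 2*(e:ℝ) := by ring
    rw [h1, h2] at hb
    push_cast
    nlinarith [hb]





lemma card_le_layer {d : ℕ} (p : Fin d → ℤ) (S : Finset (Fin d → ℤ)) (r : ℕ) :
    (S.card : ℝ) - (2*(r:ℝ)+1)^d ≤ ((S.filter fun x => r < iDist p x).card : ℝ) := by
  have hsplit := Finset.card_filter_add_card_filter_not
    (s := S) (p := fun x => r < iDist p x)
  have hc : (S.filter fun x => ¬ r < iDist p x).card ≤ (2*r+1)^d := by
    simpa [not_lt] using count_le p S r
  have hcast : (((2*r+1)^d : ℕ) : ℝ) = (2*(r:ℝ)+1)^d := by push_cast; ring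
  have h1 : (S.card : ℝ) ≤ ((S.filter fun x => r < iDist p x).card : ℝ) + (2*(r:ℝ)+1)^d := by
    rw [← hcast]
    exact_mod_cast le_trans (le_of_eq hsplit.symm) (by exact_mod_cast add_le_add_right hc _)
  linarith

lemma main_bound {d : ℕ} (p : Fin d → ℤ) (S : Finset (Fin d → ℤ)) (e : ℕ) :
    (e:ℝ) * S.card - (2*(e:ℝ))^(d+1)/(2*((d:ℝ)+1)) ≤ ∑ x ∈ S, (iDist p x : ℝ) := by
  have hlayer : (∑ r ∈ Finset.range e, ((S.filter fun x => r < iDist p x).card : ℝ))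
      ≤ ∑ x ∈ S, (iDist p x : ℝ) := by exact_mod_cast layer_le_sum p S e
  have h2 : ∑ r ∈ Finset.range e, ((S.card : ℝ) - (2*(r:ℝ)+1)^d)
      ≤ ∑ r ∈ Finset.range e, ((S.filter fun x => r < iDist p x).card : ℝ) :=
    Finset.sum_le_sum fun r _ => card_le_layer p S r
  have h3 : ∑ r ∈ Finset.range e, ((S.card : ℝ) - (2*(r:ℝ)+1)^d)
      = (e:ℝ) * S.card - ∑ r ∈ Finset.range e, (2*(r:ℝ)+1)^d := by
    rw [Finset.sum_sub_distrib, Finset.sum_const, Finset.card_range, nsmul_eq_mul]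
  have h4 := sum_odd_pow_le d e
  linarith

lemma trivial_bound {d : ℕ} (p : Fin d → ℤ) (S : Finset (Fin d → ℤ)) :
    (S.card : ℝ) - 1 ≤ ∑ x ∈ S, (iDist p x : ℝ) := by
  have hlayer : (∑ r ∈ Finset.range 1, ((S.filter fun x => r < iDist p x).card : ℝ))
      ≤ ∑ x ∈ S, (iDist p x : ℝ) := by exact_mod_cast layer_le_sum p S 1
  have h2 := card_le_layer p S 0
  simp only [Finset.sum_range_one] at hlayer
  have h3 : ((2:ℝ) * ((0:ℕ):ℝ) + 1)^d = 1 := by norm_num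
  rw [h3] at h2
  linarith

lemma rpow_inv_le {d a K : ℕ} (hd : 0 < d) (h : a ≤ K^d) : (a:ℝ)^((d:ℝ)⁻¹) ≤ K := by
  have h' : (a:ℝ) ≤ (K:ℝ)^d := by exact_mod_cast h
  calc (a:ℝ)^((d:ℝ)⁻¹) ≤ ((K:ℝ)^d)^((d:ℝ)⁻¹) :=
        Real.rpow_le_rpow (Nat.cast_nonneg a) h' (by positivity)
    _ = K := by
        rw [← Real.rpow_natCast (K:ℝ) d, ← Real.rpow_mul (Nat.cast_nonneg K),
          mul_inv_cancel₀ (by exact_mod_cast hd.ne' : (d:ℝ) ≠ 0), Real.rpow_one]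




lemma exists_e (d m : ℕ) (hd : 0 < d) (hA : 4^d < m) :
    ∃ e : ℕ, 2 ≤ e ∧ (2*e)^d ≤ m+1 ∧ m+1 < (2*(e+1))^d := by
  classical
  have h4pos : 0 < 4^d := pow_pos (by norm_num) d
  set P := fun e : ℕ => (2*e)^d ≤ m+1 with hP
  have hP2 : P 2 := by
    show (2*2)^d ≤ m+1
    have h44 : (2*2)^d = 4^d := by norm_num
    omega
  set e := Nat.findGreatest P (m+1) with he
  have he2 : 2 ≤ e := Nat.le_findGreatest (by omega) hP2
  have heP : (2*e)^d ≤ m+1 := Nat.findGreatest_spec (m := 2) (by omega) hP2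
  have hem : e ≤ m := by
    have h6 := Nat.le_self_pow (hd.ne') (2*e)
    omega
  have heQ : m + 1 < (2*(e+1))^d := by
    by_contra hcon
    push_neg at hcon
    have hng : ¬ P (e+1) :=
      Nat.findGreatest_is_greatest (P := P) (n := m+1) (k := e+1) (by omega) (by omega)
    exact hng hcon
  exact ⟨e, he2, heP, heQ⟩

lemma core (d m : ℕ) (hd : 1 ≤ d) (hm : 1 ≤ m) (B : ℝ)
    (hB0 : (m:ℝ) ≤ B)
    (hB : ∀ e : ℕ, (e:ℝ)*((m:ℝ)+1) - (2*(e:ℝ))^(d+1)/(2*((d:ℝ)+1)) ≤ B) :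
    (m:ℝ)^((1:ℝ) + 1/(d:ℝ)) / 4 ≤ B := by
  have hd0 : (0:ℕ) < d := hd
  have hm0 : (0:ℝ) < m := by exact_mod_cast hm
  have hD1 : (1:ℝ) ≤ (d:ℝ) := by exact_mod_cast hd
  have hsplit : (m:ℝ)^((1:ℝ) + 1/(d:ℝ)) = m * (m:ℝ)^((d:ℝ)⁻¹) := by
    rw [Real.rpow_add hm0, Real.rpow_one, one_div]
  rw [hsplit, div_le_iff₀ (by norm_num : (0:ℝ) < 4)]
  obtain ⟨X, hXle, hX0⟩ : ∃ X : ℝ, ((m:ℝ)^((d:ℝ)⁻¹) = X) ∧ 0 ≤ X :=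
    ⟨_, rfl, Real.rpow_nonneg (Nat.cast_nonneg m) _⟩
  rw [hXle]
  by_cases hA : m ≤ 4^d
  · have h4 : X ≤ 4 := by
      have h4' := rpow_inv_le hd0 hA
      rw [hXle] at h4'
      simpa using h4'
    calc (m:ℝ) * X ≤ (m:ℝ) * 4 := mul_le_mul_of_nonneg_left h4 hm0.le
      _ ≤ B * 4 := by linarith
  · push_neg at hA
    obtain ⟨e, he2, heP, heQ⟩ := exists_e d m hd0 hA
    have hc1 : (2*(e:ℝ))^d ≤ (m:ℝ) + 1 := by exact_mod_cast heP
    have hc2 : X ≤ 2*(e:ℝ) + 2 := by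
      have hmle : m ≤ (2*(e+1))^d := by omega
      have h7 := rpow_inv_le hd0 hmle
      rw [hXle] at h7
      calc X ≤ ((2*(e+1) : ℕ) : ℝ) := h7
        _ = 2*(e:ℝ) + 2 := by push_cast; ring
    have hE2 : (2:ℝ) ≤ (e:ℝ) := by exact_mod_cast he2
    have hd2 : (0:ℝ) < 2*((d:ℝ)+1) := by positivity
    have h5 : ((e:ℝ)*((m:ℝ)+1) - B)*(2*((d:ℝ)+1)) ≤ (2*(e:ℝ))^(d+1) := by
      rw [← le_div_iff₀ hd2]
      linarith [hB e]
    have hpow : (2*(e:ℝ))^(d+1) ≤ ((m:ℝ)+1)*(2*(e:ℝ)) := by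
      rw [pow_succ]
      exact mul_le_mul_of_nonneg_right hc1 (by positivity)
    have h6 : ((e:ℝ)*((m:ℝ)+1) - B)*(2*((d:ℝ)+1)) ≤ ((m:ℝ)+1)*(2*(e:ℝ)) :=
      le_trans h5 hpow
    clear hB hsplit hc1
    rcases eq_or_lt_of_le hD1 with hd1 | hd1
    · -- d = 1
      have hdnat : d = 1 := by exact_mod_cast hd1.symm
      have hXm : X = (m:ℝ) := by
        rw [← hXle, ← hd1]; simp
      have hmlt : m ≤ 2*e := by
        have h8 : (2*(e+1))^d = 2*(e+1) := by rw [hdnat, pow_one]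
        omega
      have hme : (m:ℝ) ≤ 2*(e:ℝ) := by exact_mod_cast hmlt
      rw [hXm]
      rw [← hd1] at h6
      clear h5 hpow hXle
      have t3 : 2*(e:ℝ)*((m:ℝ)+1) ≤ 4*B := by nlinarith [h6]
      have t1 : (m:ℝ)*((m:ℝ)+1) ≤ 2*(e:ℝ)*((m:ℝ)+1) :=
        mul_le_mul_of_nonneg_right hme (by positivity)
      nlinarith [t1, t3, hm0]
    · -- d ≥ 2
      have hD2 : (2:ℝ) ≤ (d:ℝ) := by
        have h9 : 2 ≤ d := by exact_mod_cast hd1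
        exact_mod_cast h9
      by_cases hsmall : d = 2 ∧ e = 2
      · obtain ⟨hd2', he2'⟩ := hsmall
        have hepow : (2*(e:ℝ))^(d+1) = 64 := by rw [he2', hd2']; norm_num
        rw [hepow] at h5
        have hEr : (e:ℝ) = 2 := by rw [he2']; norm_num
        have hDr : (d:ℝ) = 2 := by rw [hd2']; norm_num
        rw [hEr, hDr] at h5
        clear hpow h6
        -- h5 : (2*(m+1) - B)*(2*3) ≤ 64
        have hm17 : (17:ℝ) ≤ (m:ℝ) := by
          have : 17 ≤ m := by rw [hd2'] at hA; omega
          exact_mod_cast this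
        have hm35 : m ≤ 34 := by
          rw [he2', hd2'] at heQ; omega
        by_cases hm24 : m ≤ 24
        · have hX5 : X ≤ 5 := by
            have h25 : m ≤ 5^d := by rw [hd2']; omega
            have h10 := rpow_inv_le hd0 h25
            rw [hXle] at h10
            simpa using h10
          have hmX : (m:ℝ)*X ≤ (m:ℝ)*5 := mul_le_mul_of_nonneg_left hX5 hm0.le
          linarith [h5, hm17, hmX]
        · push_neg at hm24
          have hX6 : X ≤ 6 := by
            have h36 : m ≤ 6^d := by rw [hd2']; omega
            have h10 := rpow_inv_le hd0 h36
            rw [hXle] at h10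
            simpa using h10
          have hm25 : (25:ℝ) ≤ (m:ℝ) := by exact_mod_cast hm24
          have hmX : (m:ℝ)*X ≤ (m:ℝ)*6 := mul_le_mul_of_nonneg_left hX6 hm0.le
          linarith [h5, hm25, hmX]
      · -- d ≥ 3 or e ≥ 3
        have hdn2 : 2 ≤ d := by exact_mod_cast hD2
        have hkey : (2*(e:ℝ)+2)*((d:ℝ)+1) ≤ 2*(2*(e:ℝ))*(d:ℝ) := by
          rcases (not_and_or.mp hsmall) with h | h
          · have h11 : 3 ≤ d := by omega
            have hD3 : (3:ℝ) ≤ (d:ℝ) := by exact_mod_cast h11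
            nlinarith [mul_nonneg (by linarith : (0:ℝ) ≤ (e:ℝ)-2) (by linarith : (0:ℝ) ≤ (d:ℝ)-1)]
          · have h11 : 3 ≤ e := by omega
            have hE3 : (3:ℝ) ≤ (e:ℝ) := by exact_mod_cast h11
            nlinarith [mul_nonneg (by linarith : (0:ℝ) ≤ (e:ℝ)-1) (by linarith : (0:ℝ) ≤ (d:ℝ)-2)]
        clear h5 hpow hXle
        have hdp : (0:ℝ) < (d:ℝ) + 1 := by positivity
        have hgoal : (m:ℝ) * X * ((d:ℝ)+1) ≤ (B * 4) * ((d:ℝ)+1) := by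
          have c1 : (m:ℝ) * X * ((d:ℝ)+1) ≤ (m:ℝ) * (2*(e:ℝ)+2) * ((d:ℝ)+1) :=
            mul_le_mul_of_nonneg_right (mul_le_mul_of_nonneg_left hc2 hm0.le) hdp.le
          have hmm1 : (m:ℝ) ≤ (m:ℝ)+1 := by linarith
          have hfac : (0:ℝ) ≤ (2*(e:ℝ)+2) * ((d:ℝ)+1) := by positivity
          have c2 : (m:ℝ) * ((2*(e:ℝ)+2) * ((d:ℝ)+1)) ≤ ((m:ℝ)+1) * ((2*(e:ℝ)+2) * ((d:ℝ)+1)) :=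
            mul_le_mul_of_nonneg_right hmm1 hfac
          have hmp1 : (0:ℝ) ≤ (m:ℝ)+1 := by linarith
          have c3 : ((m:ℝ)+1) * ((2*(e:ℝ)+2)*((d:ℝ)+1)) ≤ ((m:ℝ)+1) * (2*(2*(e:ℝ))*(d:ℝ)) :=
            mul_le_mul_of_nonneg_left hkey hmp1
          have c4 : ((m:ℝ)+1) * (2*(2*(e:ℝ))*(d:ℝ)) ≤ (B * 4) * ((d:ℝ)+1) := by
            nlinarith [h6]
          linarith [c1, c2, c3, c4]
        exact le_of_mul_le_mul_right hgoal hdp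


lemma part1 {d : ℕ} (hd : 1 ≤ d) (S : Finset (Fin d → ℤ)) (p : Fin d → ℤ) (hp : p ∈ S) :
    ((S.card : ℝ) - 1) ^ ((1 : ℝ) + 1 / (d : ℝ)) / 4 ≤ ∑ x ∈ S, eDist p x := by
  have hcard : 1 ≤ S.card := Finset.card_pos.mpr ⟨p, hp⟩
  obtain ⟨m, hm⟩ : ∃ m, S.card = m + 1 := ⟨S.card - 1, by omega⟩
  have hSm : ((S.card : ℝ) - 1) = (m : ℝ) := by rw [hm]; push_cast; ring
  rw [hSm]
  have hEI : ∑ x ∈ S, (iDist p x : ℝ) ≤ ∑ x ∈ S, eDist p x :=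
    Finset.sum_le_sum fun x _ => iDist_le_eDist p x
  have hsum0 : (0:ℝ) ≤ ∑ x ∈ S, eDist p x :=
    Finset.sum_nonneg fun x _ => eDist_nonneg p x
  rcases Nat.eq_zero_or_pos m with h0 | hm1
  · subst h0
    rw [Nat.cast_zero, Real.zero_rpow (by positivity : (1:ℝ) + 1/(d:ℝ) ≠ 0)]
    linarith
  · have hB0 : (m:ℝ) ≤ ∑ x ∈ S, (iDist p x : ℝ) := by
      have := trivial_bound p S
      rw [hm] at this
      push_cast at this
      linarith
    have hB : ∀ e : ℕ, (e:ℝ)*((m:ℝ)+1) - (2*(e:ℝ))^(d+1)/(2*((d:ℝ)+1)) ≤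
        ∑ x ∈ S, (iDist p x : ℝ) := by
      intro e
      have := main_bound p S e
      rw [hm] at this
      push_cast at this
      linarith
    have := core d m hd hm1 (∑ x ∈ S, (iDist p x : ℝ)) hB0 hB
    linarith

end LatticeSpread

/-- For every `d ≥ 1`, every finite subset `S` of `ℤ^d` and every `p ∈ S`, the sum of
Euclidean distances from `p` to the points of `S` is at least `(|S| - 1)^(1+1/d) / 4`.
Consequently the pullback of the Euclidean metric along any injection `f : V → ℤ^d`
satisfies the `d`-dimensional spreading constraints. -/
theorem lattice_spreading (d : ℕ) (hd : 1 ≤ d) :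
    (∀ S : Finset (Fin d → ℤ), ∀ p ∈ S,
      ((S.card : ℝ) - 1) ^ ((1 : ℝ) + 1 / (d : ℝ)) / 4 ≤ ∑ x ∈ S, eDist p x) ∧
    (∀ (V : Type) (f : V → (Fin d → ℤ)), Function.Injective f →
      ∀ S : Finset V, ∀ u ∈ S,
        ((S.card : ℝ) - 1) ^ ((1 : ℝ) + 1 / (d : ℝ)) / 4 ≤
          ∑ v ∈ S, eDist (f u) (f v)) := by
  constructor
  · exact fun S p hp => LatticeSpread.part1 hd S p hp
  · intro V f hf S u hu
    have himg : ∑ v ∈ S, eDist (f u) (f v) = ∑ x ∈ S.image f, eDist (f u) x :=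
      (Finset.sum_image (fun a _ b _ h => hf h)).symm
    rw [himg]
    have hcard : (S.image f).card = S.card := Finset.card_image_of_injective S hf
    have h := LatticeSpread.part1 hd (S.image f) (f u) (Finset.mem_image_of_mem f hu)
    rwa [hcard] at h
end

section
/- There is a constant C > 0 with the following property (CKR partitioning). For every finite metric space (V, dist) and every subset T ⊆ V with |T| = k ≥ 2, there exists a (finitely supported) probability distribution over maps g : V → T such that: (a) almost surely g(t) = t for all t ∈ T; (b) almost surely dist(u, g(u)) ≤ 2·dist(u, T) for all u ∈ V, where dist(u,T) = min_{t∈T} dist(u,t); and (c) for all u, v ∈ V, Pr[g(u) ≠ g(v)] · (dist(u,T) + dist(v,T)) ≤ C · log k · dist(u,v). -/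
open scoped BigOperators

/-- `dist` is a metric on `V`. -/
def IsMetric {V : Type*} (dist : V → V → ℝ) : Prop :=
  (∀ x, dist x x = 0) ∧ (∀ x y, 0 ≤ dist x y) ∧ (∀ x y, dist x y = dist y x) ∧
  (∀ x y z, dist x z ≤ dist x y + dist y z) ∧ (∀ x y, dist x y = 0 → x = y)

open Finset

set_option linter.unusedSectionVars false
set_option maxHeartbeats 1000000

namespace CKRaux



/-- Permutation counting: probability that `t` is σ-first in `B` is ≤ 1/|B|. -/
lemma perm_min_count {α : Type} [Fintype α] [DecidableEq α] {n : ℕ} (B : Finset α) {t : α}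
    (ht : t ∈ B) :
    (univ.filter (fun σ : α ≃ Fin n => ∀ s ∈ B, σ t ≤ σ s)).card * B.card
      ≤ Fintype.card (α ≃ Fin n) := by
  classical
  set E : α → Finset (α ≃ Fin n) := fun b => univ.filter (fun σ => ∀ s ∈ B, σ b ≤ σ s) with hE
  have hcard : ∀ b ∈ B, (E b).card = (E t).card := by
    intro b hb
    refine Finset.card_bij' (fun σ _ => (Equiv.swap t b).trans σ)
      (fun σ _ => (Equiv.swap t b).trans σ) ?_ ?_ ?_ ?_
    · intro σ hσ
      simp only [hE, mem_filter, mem_univ, true_and] at hσ ⊢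
      intro s hs
      have hs' : Equiv.swap t b s ∈ B := by
        rcases eq_or_ne s t with rfl | hst
        · simpa [Equiv.swap_apply_left] using hb
        rcases eq_or_ne s b with rfl | hsb
        · simpa [Equiv.swap_apply_right] using ht
        · rwa [Equiv.swap_apply_of_ne_of_ne hst hsb]
      have := hσ _ hs'
      simpa [Equiv.swap_apply_left] using this
    · intro σ hσ
      simp only [hE, mem_filter, mem_univ, true_and] at hσ ⊢
      intro s hs
      have hs' : Equiv.swap t b s ∈ B := by
        rcases eq_or_ne s t with rfl | hst
        · simpa [Equiv.swap_apply_left] using hb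
        rcases eq_or_ne s b with rfl | hsb
        · simpa [Equiv.swap_apply_right] using ht
        · rwa [Equiv.swap_apply_of_ne_of_ne hst hsb]
      have := hσ _ hs'
      simpa [Equiv.swap_apply_right, Equiv.swap_apply_left] using this
    · intro σ _
      ext x
      simp [Equiv.swap_apply_self]
    · intro σ _
      ext x
      simp [Equiv.swap_apply_self]
  have hdisj : (B : Set α).PairwiseDisjoint E := by
    intro b hb b' hb' hne
    simp only [Finset.disjoint_left]
    intro σ hσ hσ'
    simp only [hE, mem_filter, mem_univ, true_and] at hσ hσ'
    exact hne (σ.injective (le_antisymm (hσ _ hb') (hσ' _ hb)))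
  calc (univ.filter (fun σ : α ≃ Fin n => ∀ s ∈ B, σ t ≤ σ s)).card * B.card
      = ∑ b ∈ B, (E b).card := by
        rw [Finset.sum_congr rfl hcard, Finset.sum_const, smul_eq_mul, mul_comm]
    _ = (B.biUnion E).card := (Finset.card_biUnion hdisj).symm
    _ ≤ Fintype.card (α ≃ Fin n) := by
        simpa using Finset.card_le_card (Finset.subset_univ (B.biUnion E))




lemma filter_prod_card {α β : Type} [Fintype α] [Fintype β] (p : α → Prop) (q : β → Prop)
    [DecidablePred p] [DecidablePred q] :
    (Finset.univ.filter fun ω : α × β => p ω.1 ∧ q ω.2).card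
      = (Finset.univ.filter p).card * (Finset.univ.filter q).card := by
  rw [← Finset.univ_product_univ, Finset.filter_product, Finset.card_product]

/-- Grid counting: number of grid points `1 + i/m` in `[x, y)` is at most `m(y-x)+1`. -/
lemma grid_count {m : ℕ} {x y : ℝ} (P : Fin m → Prop) [DecidablePred P]
    (h : ∀ i, P i → x ≤ 1 + (i : ℝ) / m ∧ 1 + (i : ℝ) / m < y)
    (hne : (univ.filter P).Nonempty) :
    ((univ.filter P).card : ℝ) ≤ m * (y - x) + 1 := by
  have hm : 0 < m := by
    obtain ⟨i, _⟩ := hne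
    exact i.pos
  have hm' : (0 : ℝ) < m := by exact_mod_cast hm
  set i0 := (univ.filter P).min' hne with hi0
  have hi0P : P i0 := by
    have := (univ.filter P).min'_mem hne
    simpa using this
  have hx0 : x ≤ 1 + (i0 : ℝ) / m := (h i0 hi0P).1
  have hxy : x < y := lt_of_le_of_lt hx0 (h i0 hi0P).2
  have key : ∀ i ∈ univ.filter P, (i : Fin m).val - i0.val ≤ ⌊m * (y - x)⌋₊ := by
    intro i hi
    have hiP : P i := by simpa using hi
    have hle : i0 ≤ i := Finset.min'_le _ _ hi
    have hlev : (i0.val : ℝ) ≤ i.val := by exact_mod_cast (Fin.le_def.mp hle)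
    have h1 : ((i.val - i0.val : ℕ) : ℝ) = (i.val : ℝ) - i0.val := by
      have : i0.val ≤ i.val := Fin.le_def.mp hle
      push_cast [this]; ring
    refine Nat.le_floor ?_
    rw [h1]
    have h2 : (i.val : ℝ) / m - (i0.val : ℝ) / m < y - x := by
      have := (h i hiP).2
      have := hx0
      nlinarith
    calc (i.val : ℝ) - i0.val = m * ((i.val : ℝ) / m - (i0.val : ℝ) / m) := by
          field_simp
      _ ≤ m * (y - x) := by nlinarith
  have hinj : Set.InjOn (fun i : Fin m => i.val - i0.val) (univ.filter P : Set (Fin m)) := by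
    intro i hi j hj hij
    simp only [Finset.coe_filter, Set.mem_setOf_eq] at hi hj
    have hi' : i0 ≤ i := Finset.min'_le _ _ (by simpa using hi.2)
    have hj' : i0 ≤ j := Finset.min'_le _ _ (by simpa using hj.2)
    have hi'' : i0.val ≤ i.val := Fin.le_def.mp hi'
    have hj'' : i0.val ≤ j.val := Fin.le_def.mp hj'
    simp only at hij
    have : i.val = j.val := by omega
    exact Fin.ext this
  have hsub : (univ.filter P).card ≤ (Finset.range (⌊m * (y - x)⌋₊ + 1)).card := by
    apply Finset.card_le_card_of_injOn (fun i => i.val - i0.val)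
    · intro i hi
      simp only [Finset.mem_range]
      exact Finset.mem_coe.mpr (Finset.mem_range.mpr (Nat.lt_succ_of_le (key i hi)))
    · intro i hi j hj hij
      exact hinj (by simpa using hi) (by simpa using hj) hij
  rw [Finset.card_range] at hsub
  have hfl : (⌊m * (y - x)⌋₊ : ℝ) ≤ m * (y - x) :=
    Nat.floor_le (mul_nonneg hm'.le (by linarith))
  calc ((univ.filter P).card : ℝ) ≤ (⌊m * (y - x)⌋₊ : ℝ) + 1 := by exact_mod_cast hsub
    _ ≤ m * (y - x) + 1 := by linarith

/-- Sum of inverse ranks bound. -/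
lemma sum_inv_rank {α : Type} [Fintype α] [DecidableEq α] (f : α → ℝ) :
    ∑ t : α, (1 : ℝ) / (univ.filter (fun s => f s ≤ f t)).card
      ≤ ∑ i : Fin (Fintype.card α), (1 : ℝ) / ((i : ℕ) + 1) := by
  classical
  set n := Fintype.card α with hn
  let e : Fin n ≃ α := (Fintype.equivFin α).symm
  let F : Fin n → ℝ := f ∘ e
  let τ : Equiv.Perm (Fin n) := Tuple.sort F
  have hmono : Monotone (F ∘ τ) := Tuple.monotone_sort F
  let ρ : Fin n ≃ α := τ.trans e
  have hLHS : ∑ t : α, (1 : ℝ) / (univ.filter (fun s => f s ≤ f t)).card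
      = ∑ i : Fin n, (1 : ℝ) / (univ.filter (fun s => f s ≤ f (ρ i))).card :=
    (Equiv.sum_comp ρ (fun t => (1 : ℝ) / (univ.filter (fun s => f s ≤ f t)).card)).symm
  rw [hLHS]
  apply Finset.sum_le_sum
  intro i _
  have hcard : (i : ℕ) + 1 ≤ (univ.filter (fun s => f s ≤ f (ρ i))).card := by
    have himg : (Finset.Iic i).image ρ ⊆ univ.filter (fun s => f s ≤ f (ρ i)) := by
      intro s hs
      simp only [Finset.mem_image, Finset.mem_Iic] at hs
      obtain ⟨j, hj, rfl⟩ := hs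
      simp only [Finset.mem_filter, Finset.mem_univ, true_and]
      exact hmono hj
    have : ((Finset.Iic i).image ρ).card = (i : ℕ) + 1 := by
      rw [Finset.card_image_of_injective _ ρ.injective, Fin.card_Iic]
    rw [← this]
    exact Finset.card_le_card himg
  have hpos : (0 : ℝ) < (i : ℕ) + 1 := by positivity
  apply one_div_le_one_div_of_le hpos
  exact_mod_cast hcard

/-- Harmonic bound. -/
lemma sum_fin_inv_le (k : ℕ) (hk : 2 ≤ k) :
    ∑ i : Fin k, (1 : ℝ) / ((i : ℕ) + 1) ≤ 5 * Real.log k := by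
  have h1 : ∑ i : Fin k, (1 : ℝ) / ((i : ℕ) + 1) = (harmonic k : ℝ) := by
    rw [Fin.sum_univ_eq_sum_range (fun i => (1 : ℝ) / ((i : ℕ) + 1))]
    rw [harmonic]
    push_cast
    refine Finset.sum_congr rfl fun i _ => ?_
    rw [one_div]
  rw [h1]
  have h2 : (harmonic k : ℝ) ≤ 1 + Real.log k := harmonic_le_one_add_log k
  have hlog2 : Real.log 2 ≤ Real.log k := by
    apply Real.log_le_log (by norm_num)
    exact_mod_cast hk
  have h3 : (0.6931471803 : ℝ) < Real.log 2 := Real.log_two_gt_d9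
  linarith





variable {V : Type} [Fintype V] [DecidableEq V] (dist : V → V → ℝ) (T : Finset V) (hT : T.Nonempty)

/-- distance to the terminal set -/
noncomputable def Am (u : V) : ℝ := T.inf' hT fun t => dist u t

open Classical in
/-- capture set: terminals within `r · Am u` of `u` -/
noncomputable def capt (r : ℝ) (u : V) : Finset {x // x ∈ T} :=
  Finset.univ.filter fun t => dist u ↑t ≤ r * Am dist T hT u

open Classical in
/-- the random assignment map: σ-first terminal capturing `u` -/
noncomputable def gmap (σ : {x // x ∈ T} ≃ Fin T.card) (r : ℝ) (u : V) : {x // x ∈ T} :=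
  if h : (capt dist T hT r u).Nonempty then
    σ.symm (((capt dist T hT r u).image σ).min' (h.image σ))
  else ⟨hT.choose, hT.choose_spec⟩

open Classical in
/-- settler of the pair `(u,v)`: σ-first terminal capturing `u` or `v` -/
noncomputable def smap (σ : {x // x ∈ T} ≃ Fin T.card) (r : ℝ) (u v : V) : {x // x ∈ T} :=
  if h : (capt dist T hT r u ∪ capt dist T hT r v).Nonempty then
    σ.symm (((capt dist T hT r u ∪ capt dist T hT r v).image σ).min' (h.image σ))
  else ⟨hT.choose, hT.choose_spec⟩

lemma Am_nonneg (hM : IsMetric dist) (u : V) : 0 ≤ Am dist T hT u := by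
  apply Finset.le_inf'
  intro t _
  exact hM.2.1 u t

lemma Am_le (u : V) {t : V} (ht : t ∈ T) : Am dist T hT u ≤ dist u t :=
  Finset.inf'_le _ ht

lemma Am_exists (u : V) : ∃ t, t ∈ T ∧ Am dist T hT u = dist u t :=
  Finset.exists_mem_eq_inf' hT _

lemma Am_mem_zero (hM : IsMetric dist) {t : V} (ht : t ∈ T) : Am dist T hT t = 0 := by
  refine le_antisymm ?_ (Am_nonneg dist T hT hM t)
  have := Am_le dist T hT t ht
  rwa [hM.1 t] at this

lemma Am_triangle (hM : IsMetric dist) (u v : V) :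
    Am dist T hT u ≤ dist u v + Am dist T hT v := by
  obtain ⟨t, ht, heq⟩ := Am_exists dist T hT v
  calc Am dist T hT u ≤ dist u t := Am_le dist T hT u ht
    _ ≤ dist u v + dist v t := hM.2.2.2.1 u v t
    _ = dist u v + Am dist T hT v := by rw [heq]

lemma mem_capt {r : ℝ} {u : V} {t : {x // x ∈ T}} :
    t ∈ capt dist T hT r u ↔ dist u ↑t ≤ r * Am dist T hT u := by
  classical
  simp [capt]

lemma capt_nonempty (hM : IsMetric dist) {r : ℝ} (hr : 1 ≤ r) (u : V) :
    (capt dist T hT r u).Nonempty := by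
  obtain ⟨t, ht, heq⟩ := Am_exists dist T hT u
  refine ⟨⟨t, ht⟩, ?_⟩
  rw [mem_capt]
  calc dist u t = Am dist T hT u := heq.symm
    _ = 1 * Am dist T hT u := (one_mul _).symm
    _ ≤ r * Am dist T hT u := by
        apply mul_le_mul_of_nonneg_right hr (Am_nonneg dist T hT hM u)

lemma gmap_spec (hM : IsMetric dist) (σ : {x // x ∈ T} ≃ Fin T.card) {r : ℝ} (hr : 1 ≤ r)
    (u : V) :
    gmap dist T hT σ r u ∈ capt dist T hT r u ∧
      ∀ s ∈ capt dist T hT r u, σ (gmap dist T hT σ r u) ≤ σ s := by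
  classical
  have h := capt_nonempty dist T hT hM hr u
  rw [gmap, dif_pos h]
  have hmem := ((capt dist T hT r u).image σ).min'_mem (h.image σ)
  rw [Finset.mem_image] at hmem
  obtain ⟨t, htc, hteq⟩ := hmem
  constructor
  · rw [← hteq, Equiv.symm_apply_apply]; exact htc
  · intro s hs
    rw [Equiv.apply_symm_apply]
    exact Finset.min'_le _ _ (Finset.mem_image_of_mem σ hs)

lemma smap_spec (hM : IsMetric dist) (σ : {x // x ∈ T} ≃ Fin T.card) {r : ℝ} (hr : 1 ≤ r)
    (u v : V) :
    smap dist T hT σ r u v ∈ capt dist T hT r u ∪ capt dist T hT r v ∧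
      ∀ s ∈ capt dist T hT r u ∪ capt dist T hT r v, σ (smap dist T hT σ r u v) ≤ σ s := by
  classical
  have h : (capt dist T hT r u ∪ capt dist T hT r v).Nonempty :=
    ((capt_nonempty dist T hT hM hr u).mono Finset.subset_union_left)
  rw [smap, dif_pos h]
  have hmem := ((capt dist T hT r u ∪ capt dist T hT r v).image σ).min'_mem (h.image σ)
  rw [Finset.mem_image] at hmem
  obtain ⟨t, htc, hteq⟩ := hmem
  constructor
  · rw [← hteq, Equiv.symm_apply_apply]; exact htc
  · intro s hs
    rw [Equiv.apply_symm_apply]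
    exact Finset.min'_le _ _ (Finset.mem_image_of_mem σ hs)

/-- if `g u ≠ g v` then the settler captures exactly one of them -/
lemma settler_cuts (hM : IsMetric dist) (σ : {x // x ∈ T} ≃ Fin T.card) {r : ℝ} (hr : 1 ≤ r)
    (u v : V) (hne : gmap dist T hT σ r u ≠ gmap dist T hT σ r v) :
    (smap dist T hT σ r u v ∈ capt dist T hT r u ∧ smap dist T hT σ r u v ∉ capt dist T hT r v) ∨
    (smap dist T hT σ r u v ∈ capt dist T hT r v ∧ smap dist T hT σ r u v ∉ capt dist T hT r u) := by
  obtain ⟨hsmem, hsmin⟩ := smap_spec dist T hT hM σ hr u v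
  obtain ⟨hgu, hgumin⟩ := gmap_spec dist T hT hM σ hr u
  obtain ⟨hgv, hgvmin⟩ := gmap_spec dist T hT hM σ hr v
  rw [Finset.mem_union] at hsmem
  by_cases hcu : smap dist T hT σ r u v ∈ capt dist T hT r u
  · by_cases hcv : smap dist T hT σ r u v ∈ capt dist T hT r v
    · exfalso
      have h1 : σ (gmap dist T hT σ r u) = σ (smap dist T hT σ r u v) :=
        le_antisymm (hgumin _ hcu) (hsmin _ (Finset.mem_union_left _ hgu))
      have h2 : σ (gmap dist T hT σ r v) = σ (smap dist T hT σ r u v) :=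
        le_antisymm (hgvmin _ hcv) (hsmin _ (Finset.mem_union_right _ hgv))
      exact hne (σ.injective (h1.trans h2.symm))
    · exact Or.inl ⟨hcu, hcv⟩
  · rcases hsmem with h | h
    · exact absurd h hcu
    · exact Or.inr ⟨h, hcu⟩
variable {V : Type} [Fintype V] [DecidableEq V] (dist : V → V → ℝ) (T : Finset V) (hT : T.Nonempty)

lemma main_count (hM : IsMetric dist) (hk : 2 ≤ T.card) (M : ℕ) (hM0 : 0 < M)
    (hMd : ∀ u v : V, u ≠ v → Am dist T hT u + Am dist T hT v ≤ M * dist u v)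
    (u v : V) (huv : u ≠ v) :
    ((Finset.univ.filter fun ω : ({x // x ∈ T} ≃ Fin T.card) × Fin M =>
        gmap dist T hT ω.1 (1 + (ω.2 : ℝ) / M) u ≠ gmap dist T hT ω.1 (1 + (ω.2 : ℝ) / M) v).card : ℝ)
        * (Am dist T hT u + Am dist T hT v)
      ≤ 100 * Real.log T.card * dist u v
          * ((Fintype.card ({x // x ∈ T} ≃ Fin T.card) : ℝ) * M) := by
  classical
  obtain ⟨hrefl, hnonneg, hsymm, htri, hsep⟩ := hM
  set a := Am dist T hT u with ha_def
  set b := Am dist T hT v with hb_def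
  set d := dist u v with hd_def
  have hd : 0 < d := by
    rcases lt_or_eq_of_le (hnonneg u v) with h | h
    · exact h
    · exact absurd (hsep u v h.symm) huv
  have ha0 : 0 ≤ a := Am_nonneg dist T hT ⟨hrefl, hnonneg, hsymm, htri, hsep⟩ u
  have hb0 : 0 ≤ b := Am_nonneg dist T hT ⟨hrefl, hnonneg, hsymm, htri, hsep⟩ v
  have hab1 : a ≤ d + b := Am_triangle dist T hT ⟨hrefl, hnonneg, hsymm, htri, hsep⟩ u v
  have hab2 : b ≤ d + a := by
    have := Am_triangle dist T hT ⟨hrefl, hnonneg, hsymm, htri, hsep⟩ v u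
    rwa [hsymm v u] at this
  have hlog : (0.69 : ℝ) ≤ Real.log T.card := by
    have h3 : (0.6931471803 : ℝ) < Real.log 2 := Real.log_two_gt_d9
    have : Real.log 2 ≤ Real.log T.card := by
      apply Real.log_le_log (by norm_num)
      exact_mod_cast hk
    linarith
  have hNσ : (0 : ℝ) ≤ (Fintype.card ({x // x ∈ T} ≃ Fin T.card) : ℝ) := by positivity
  have hMr : (0 : ℝ) < (M : ℝ) := by exact_mod_cast hM0
  by_cases hcase : a + b ≤ 8 * d
  · -- easy case
    have hcard : ((Finset.univ.filter fun ω : ({x // x ∈ T} ≃ Fin T.card) × Fin M =>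
        gmap dist T hT ω.1 (1 + (ω.2 : ℝ) / M) u ≠ gmap dist T hT ω.1 (1 + (ω.2 : ℝ) / M) v).card : ℝ)
        ≤ (Fintype.card ({x // x ∈ T} ≃ Fin T.card) : ℝ) * M := by
      have h1 := Finset.card_filter_le (Finset.univ : Finset (({x // x ∈ T} ≃ Fin T.card) × Fin M))
        (fun ω => gmap dist T hT ω.1 (1 + (ω.2 : ℝ) / M) u ≠ gmap dist T hT ω.1 (1 + (ω.2 : ℝ) / M) v)
      have h2 : (Finset.univ : Finset (({x // x ∈ T} ≃ Fin T.card) × Fin M)).card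
          = Fintype.card ({x // x ∈ T} ≃ Fin T.card) * M := by
        rw [Finset.card_univ, Fintype.card_prod, Fintype.card_fin]
      rw [h2] at h1
      exact_mod_cast h1
    have h8 : (8 : ℝ) ≤ 100 * Real.log T.card := by linarith
    calc _ ≤ ((Fintype.card ({x // x ∈ T} ≃ Fin T.card) : ℝ) * M) * (8 * d) := by
          apply mul_le_mul hcard hcase (by linarith) (by positivity)
      _ ≤ ((Fintype.card ({x // x ∈ T} ≃ Fin T.card) : ℝ) * M) * (100 * Real.log T.card * d) := by
          apply mul_le_mul_of_nonneg_left _ (by positivity)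
          apply mul_le_mul_of_nonneg_right h8 hd.le
      _ = 100 * Real.log T.card * d * ((Fintype.card ({x // x ∈ T} ≃ Fin T.card) : ℝ) * M) := by
          ring
  · -- hard case
    push_neg at hcase
    have ha : 0 < a := by
      rcases lt_or_eq_of_le ha0 with h | h
      · exact h
      · exfalso
        obtain ⟨t, htT, heq⟩ := Am_exists dist T hT u
        have hut : u = t := hsep u t (by rw [← heq, ← ha_def, ← h])
        have hble : b ≤ d := by
          rw [hd_def, hsymm u v]
          exact Am_le dist T hT v (hut ▸ htT)
        linarith
    have hb : 0 < b := by
      rcases lt_or_eq_of_le hb0 with h | h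
      · exact h
      · exfalso
        obtain ⟨t, htT, heq⟩ := Am_exists dist T hT v
        have hvt : v = t := hsep v t (by rw [← heq, ← hb_def, ← h])
        have hale : a ≤ d := by
          rw [hd_def]
          exact Am_le dist T hT u (hvt ▸ htT)
        linarith
    have ha3 : a + b ≤ 3 * a := by nlinarith
    have hb3 : a + b ≤ 3 * b := by nlinarith
    have hMduv : a + b ≤ M * d := hMd u v huv
    set k' := Fintype.card ({x // x ∈ T} ≃ Fin T.card) with hk'
    -- B-sets
    set Bu : {x // x ∈ T} → Finset {x // x ∈ T} :=
      fun t => Finset.univ.filter (fun s => dist u ↑s ≤ dist u ↑t) with hBu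
    set Bv : {x // x ∈ T} → Finset {x // x ∈ T} :=
      fun t => Finset.univ.filter (fun s => dist v ↑s ≤ dist v ↑t) with hBv
    -- event subsets
    have hsubbad : (Finset.univ.filter fun ω : ({x // x ∈ T} ≃ Fin T.card) × Fin M =>
          gmap dist T hT ω.1 (1 + (ω.2 : ℝ) / M) u ≠ gmap dist T hT ω.1 (1 + (ω.2 : ℝ) / M) v)
        ⊆ Finset.univ.biUnion (fun t : {x // x ∈ T} =>
            (Finset.univ.filter fun ω : ({x // x ∈ T} ≃ Fin T.card) × Fin M =>
              (∀ s ∈ Bu t, ω.1 t ≤ ω.1 s) ∧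
                (dist u ↑t ≤ (1 + (ω.2 : ℝ) / M) * a ∧ ¬ dist v ↑t ≤ (1 + (ω.2 : ℝ) / M) * b))
            ∪ (Finset.univ.filter fun ω : ({x // x ∈ T} ≃ Fin T.card) × Fin M =>
              (∀ s ∈ Bv t, ω.1 t ≤ ω.1 s) ∧
                (dist v ↑t ≤ (1 + (ω.2 : ℝ) / M) * b ∧ ¬ dist u ↑t ≤ (1 + (ω.2 : ℝ) / M) * a))) := by
      intro ω hω
      have hωne : gmap dist T hT ω.1 (1 + (ω.2 : ℝ) / M) u ≠ gmap dist T hT ω.1 (1 + (ω.2 : ℝ) / M) v := by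
        simpa using hω
      have hr : (1 : ℝ) ≤ 1 + (ω.2 : ℝ) / M := by
        have : (0:ℝ) ≤ (ω.2 : ℝ) / M := by positivity
        linarith
      have hMet : IsMetric dist := ⟨hrefl, hnonneg, hsymm, htri, hsep⟩
      rcases settler_cuts dist T hT hMet ω.1 hr u v hωne with ⟨hin, hout⟩ | ⟨hin, hout⟩
      · rw [Finset.mem_biUnion]
        refine ⟨smap dist T hT ω.1 (1 + (ω.2 : ℝ) / M) u v, Finset.mem_univ _, ?_⟩
        apply Finset.mem_union_left
        rw [Finset.mem_filter]
        refine ⟨Finset.mem_univ _, ?_, ?_, ?_⟩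
        · intro s hs
          have hsd : dist u ↑s ≤ dist u ↑(smap dist T hT ω.1 (1 + (ω.2 : ℝ) / M) u v) := by
            simpa [hBu] using hs
          have hscapt : s ∈ capt dist T hT (1 + (ω.2 : ℝ) / M) u := by
            rw [mem_capt]
            exact le_trans hsd ((mem_capt dist T hT).mp hin)
          exact (smap_spec dist T hT hMet ω.1 hr u v).2 s (Finset.mem_union_left _ hscapt)
        · exact (mem_capt dist T hT).mp hin
        · intro hcon
          exact hout ((mem_capt dist T hT).mpr hcon)
      · rw [Finset.mem_biUnion]
        refine ⟨smap dist T hT ω.1 (1 + (ω.2 : ℝ) / M) u v, Finset.mem_univ _, ?_⟩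
        apply Finset.mem_union_right
        rw [Finset.mem_filter]
        refine ⟨Finset.mem_univ _, ?_, ?_, ?_⟩
        · intro s hs
          have hsd : dist v ↑s ≤ dist v ↑(smap dist T hT ω.1 (1 + (ω.2 : ℝ) / M) u v) := by
            simpa [hBv] using hs
          have hscapt : s ∈ capt dist T hT (1 + (ω.2 : ℝ) / M) v := by
            rw [mem_capt]
            exact le_trans hsd ((mem_capt dist T hT).mp hin)
          exact (smap_spec dist T hT hMet ω.1 hr u v).2 s (Finset.mem_union_right _ hscapt)
        · exact (mem_capt dist T hT).mp hin
        · intro hcon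
          exact hout ((mem_capt dist T hT).mpr hcon)
    -- per-terminal σ-count bound
    have hperm_u : ∀ t : {x // x ∈ T},
        ((Finset.univ.filter fun σ : {x // x ∈ T} ≃ Fin T.card => ∀ s ∈ Bu t, σ t ≤ σ s).card : ℝ)
          ≤ (k' : ℝ) / ((Bu t).card : ℝ) := by
      intro t
      have htB : t ∈ Bu t := by simp [hBu]
      have hBpos : 0 < ((Bu t).card : ℝ) := by
        exact_mod_cast Finset.card_pos.mpr ⟨t, htB⟩
      rw [le_div_iff₀ hBpos]
      exact_mod_cast perm_min_count (Bu t) htB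
    have hperm_v : ∀ t : {x // x ∈ T},
        ((Finset.univ.filter fun σ : {x // x ∈ T} ≃ Fin T.card => ∀ s ∈ Bv t, σ t ≤ σ s).card : ℝ)
          ≤ (k' : ℝ) / ((Bv t).card : ℝ) := by
      intro t
      have htB : t ∈ Bv t := by simp [hBv]
      have hBpos : 0 < ((Bv t).card : ℝ) := by
        exact_mod_cast Finset.card_pos.mpr ⟨t, htB⟩
      rw [le_div_iff₀ hBpos]
      exact_mod_cast perm_min_count (Bv t) htB
    -- per-terminal β-count bound (u side)
    have hgrid_u : ∀ t : {x // x ∈ T},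
        ((Finset.univ.filter fun i : Fin M =>
            dist u ↑t ≤ (1 + (i : ℝ) / M) * a ∧ ¬ dist v ↑t ≤ (1 + (i : ℝ) / M) * b).card : ℝ)
            * (a + b) ≤ (M : ℝ) * (9 * d) + (a + b) := by
      intro t
      rcases Finset.eq_empty_or_nonempty (Finset.univ.filter fun i : Fin M =>
          dist u ↑t ≤ (1 + (i : ℝ) / M) * a ∧ ¬ dist v ↑t ≤ (1 + (i : ℝ) / M) * b) with hemp | hne
      · rw [hemp]
        simp only [Finset.card_empty, Nat.cast_zero, zero_mul]
        have h9 : (0:ℝ) ≤ (M : ℝ) * (9 * d) := mul_nonneg hMr.le (by linarith)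
        linarith
      · -- witness gives dist u t < 2a
        obtain ⟨i0, hi0⟩ := hne
        rw [Finset.mem_filter] at hi0
        have hβi0 : (1 + (i0 : ℝ) / M) < 2 := by
          have h1 : ((i0 : ℕ) : ℝ) < M := by exact_mod_cast i0.2
          have h2 : (i0 : ℝ) / M < 1 := (div_lt_one hMr).mpr h1
          linarith
        have hdut2 : dist u ↑t < 2 * a := by
          calc dist u ↑t ≤ (1 + (i0 : ℝ) / M) * a := hi0.2.1
            _ < 2 * a := by nlinarith
        have hgc := grid_count (m := M) (x := dist u ↑t / a) (y := dist v ↑t / b)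
          (fun i : Fin M =>
            dist u ↑t ≤ (1 + (i : ℝ) / M) * a ∧ ¬ dist v ↑t ≤ (1 + (i : ℝ) / M) * b)
          (fun i hi => by
            constructor
            · rw [div_le_iff₀ ha]; exact hi.1
            · rw [lt_div_iff₀ hb]; exact lt_of_not_ge hi.2)
          ⟨i0, Finset.mem_filter.mpr ⟨Finset.mem_univ _, hi0.2⟩⟩
        have hdvt : dist v ↑t ≤ d + dist u ↑t := by
          calc dist v ↑t ≤ dist v u + dist u ↑t := htri v u ↑t
            _ = d + dist u ↑t := by rw [hd_def, hsymm u v]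
        have hkey : dist v ↑t / b - dist u ↑t / a ≤ 3 * d / b := by
          rw [div_sub_div _ _ hb.ne' ha.ne', div_le_div_iff₀ (by positivity) hb]
          have hdut0 : 0 ≤ dist u ↑t := hnonneg u ↑t
          have hint1 : dist v ↑t * (a * b) ≤ (d + dist u ↑t) * (a * b) :=
            mul_le_mul_of_nonneg_right hdvt (by positivity)
          have hint3 : (0:ℝ) ≤ d * a * b := by positivity
          rcases le_total a b with hab | hab
          · have hint2 : (0:ℝ) ≤ dist u ↑t * (b - a) * b :=
              mul_nonneg (mul_nonneg hdut0 (by linarith)) hb.le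
            nlinarith [hint1, hint2, hint3]
          · have hint2 : dist u ↑t * (a - b) * b ≤ (2 * a * d) * b :=
              mul_le_mul_of_nonneg_right
                (mul_le_mul hdut2.le (by linarith) (by linarith) (by linarith)) hb.le
            nlinarith [hint1, hint2, hint3]
        have hyx : (dist v ↑t / b - dist u ↑t / a) * (a + b) ≤ 9 * d := by
          calc (dist v ↑t / b - dist u ↑t / a) * (a + b) ≤ (3 * d / b) * (a + b) :=
                mul_le_mul_of_nonneg_right hkey (by linarith)
            _ ≤ (3 * d / b) * (3 * b) := by
                apply mul_le_mul_of_nonneg_left hb3 (by positivity)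
            _ = 9 * d := by field_simp; ring
        calc _ ≤ ((M : ℝ) * (dist v ↑t / b - dist u ↑t / a) + 1) * (a + b) :=
              mul_le_mul_of_nonneg_right hgc (by linarith)
          _ = (M : ℝ) * ((dist v ↑t / b - dist u ↑t / a) * (a + b)) + (a + b) := by ring
          _ ≤ (M : ℝ) * (9 * d) + (a + b) := by
              have := mul_le_mul_of_nonneg_left hyx hMr.le
              linarith
    -- per-terminal β-count bound (v side)
    have hgrid_v : ∀ t : {x // x ∈ T},
        ((Finset.univ.filter fun i : Fin M =>
            dist v ↑t ≤ (1 + (i : ℝ) / M) * b ∧ ¬ dist u ↑t ≤ (1 + (i : ℝ) / M) * a).card : ℝ)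
            * (a + b) ≤ (M : ℝ) * (9 * d) + (a + b) := by
      intro t
      rcases Finset.eq_empty_or_nonempty (Finset.univ.filter fun i : Fin M =>
          dist v ↑t ≤ (1 + (i : ℝ) / M) * b ∧ ¬ dist u ↑t ≤ (1 + (i : ℝ) / M) * a) with hemp | hne
      · rw [hemp]
        simp only [Finset.card_empty, Nat.cast_zero, zero_mul]
        have h9 : (0:ℝ) ≤ (M : ℝ) * (9 * d) := mul_nonneg hMr.le (by linarith)
        linarith
      · obtain ⟨i0, hi0⟩ := hne
        rw [Finset.mem_filter] at hi0
        have hβi0 : (1 + (i0 : ℝ) / M) < 2 := by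
          have h1 : ((i0 : ℕ) : ℝ) < M := by exact_mod_cast i0.2
          have h2 : (i0 : ℝ) / M < 1 := (div_lt_one hMr).mpr h1
          linarith
        have hdvt2 : dist v ↑t < 2 * b := by
          calc dist v ↑t ≤ (1 + (i0 : ℝ) / M) * b := hi0.2.1
            _ < 2 * b := by nlinarith
        have hgc := grid_count (m := M) (x := dist v ↑t / b) (y := dist u ↑t / a)
          (fun i : Fin M =>
            dist v ↑t ≤ (1 + (i : ℝ) / M) * b ∧ ¬ dist u ↑t ≤ (1 + (i : ℝ) / M) * a)
          (fun i hi => by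
            constructor
            · rw [div_le_iff₀ hb]; exact hi.1
            · rw [lt_div_iff₀ ha]; exact lt_of_not_ge hi.2)
          ⟨i0, Finset.mem_filter.mpr ⟨Finset.mem_univ _, hi0.2⟩⟩
        have hdut : dist u ↑t ≤ d + dist v ↑t := by
          calc dist u ↑t ≤ dist u v + dist v ↑t := htri u v ↑t
            _ = d + dist v ↑t := by rw [hd_def]
        have hkey : dist u ↑t / a - dist v ↑t / b ≤ 3 * d / a := by
          rw [div_sub_div _ _ ha.ne' hb.ne', div_le_div_iff₀ (by positivity) ha]
          have hdvt0 : 0 ≤ dist v ↑t := hnonneg v ↑t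
          have hint1 : dist u ↑t * (b * a) ≤ (d + dist v ↑t) * (b * a) :=
            mul_le_mul_of_nonneg_right hdut (by positivity)
          have hint3 : (0:ℝ) ≤ d * b * a := by positivity
          rcases le_total b a with hab | hab
          · have hint2 : (0:ℝ) ≤ dist v ↑t * (a - b) * a :=
              mul_nonneg (mul_nonneg hdvt0 (by linarith)) ha.le
            nlinarith [hint1, hint2, hint3]
          · have hint2 : dist v ↑t * (b - a) * a ≤ (2 * b * d) * a :=
              mul_le_mul_of_nonneg_right
                (mul_le_mul hdvt2.le (by linarith) (by linarith) (by linarith)) ha.le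
            nlinarith [hint1, hint2, hint3]
        have hyx : (dist u ↑t / a - dist v ↑t / b) * (a + b) ≤ 9 * d := by
          calc (dist u ↑t / a - dist v ↑t / b) * (a + b) ≤ (3 * d / a) * (a + b) :=
                mul_le_mul_of_nonneg_right hkey (by linarith)
            _ ≤ (3 * d / a) * (3 * a) := by
                apply mul_le_mul_of_nonneg_left ha3 (by positivity)
            _ = 9 * d := by field_simp; ring
        calc _ ≤ ((M : ℝ) * (dist u ↑t / a - dist v ↑t / b) + 1) * (a + b) :=
              mul_le_mul_of_nonneg_right hgc (by linarith)
          _ = (M : ℝ) * ((dist u ↑t / a - dist v ↑t / b) * (a + b)) + (a + b) := by ring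
          _ ≤ (M : ℝ) * (9 * d) + (a + b) := by
              have := mul_le_mul_of_nonneg_left hyx hMr.le
              linarith
    -- abbreviations for counts
    set cU : {x // x ∈ T} → ℕ := fun t =>
      (Finset.univ.filter fun σ : {x // x ∈ T} ≃ Fin T.card => ∀ s ∈ Bu t, σ t ≤ σ s).card with hcU
    set cV : {x // x ∈ T} → ℕ := fun t =>
      (Finset.univ.filter fun σ : {x // x ∈ T} ≃ Fin T.card => ∀ s ∈ Bv t, σ t ≤ σ s).card with hcV
    set bU : {x // x ∈ T} → ℕ := fun t =>
      (Finset.univ.filter fun i : Fin M =>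
        dist u ↑t ≤ (1 + (i : ℝ) / M) * a ∧ ¬ dist v ↑t ≤ (1 + (i : ℝ) / M) * b).card with hbU
    set bV : {x // x ∈ T} → ℕ := fun t =>
      (Finset.univ.filter fun i : Fin M =>
        dist v ↑t ≤ (1 + (i : ℝ) / M) * b ∧ ¬ dist u ↑t ≤ (1 + (i : ℝ) / M) * a).card with hbV
    have hprodU : ∀ t : {x // x ∈ T},
        (Finset.univ.filter fun ω : ({x // x ∈ T} ≃ Fin T.card) × Fin M =>
          (∀ s ∈ Bu t, ω.1 t ≤ ω.1 s) ∧
            (dist u ↑t ≤ (1 + (ω.2 : ℝ) / M) * a ∧ ¬ dist v ↑t ≤ (1 + (ω.2 : ℝ) / M) * b)).card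
          = cU t * bU t := by
      intro t
      exact filter_prod_card (fun σ : {x // x ∈ T} ≃ Fin T.card => ∀ s ∈ Bu t, σ t ≤ σ s)
        (fun i : Fin M => dist u ↑t ≤ (1 + (i : ℝ) / M) * a ∧ ¬ dist v ↑t ≤ (1 + (i : ℝ) / M) * b)
    have hprodV : ∀ t : {x // x ∈ T},
        (Finset.univ.filter fun ω : ({x // x ∈ T} ≃ Fin T.card) × Fin M =>
          (∀ s ∈ Bv t, ω.1 t ≤ ω.1 s) ∧
            (dist v ↑t ≤ (1 + (ω.2 : ℝ) / M) * b ∧ ¬ dist u ↑t ≤ (1 + (ω.2 : ℝ) / M) * a)).card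
          = cV t * bV t := by
      intro t
      exact filter_prod_card (fun σ : {x // x ∈ T} ≃ Fin T.card => ∀ s ∈ Bv t, σ t ≤ σ s)
        (fun i : Fin M => dist v ↑t ≤ (1 + (i : ℝ) / M) * b ∧ ¬ dist u ↑t ≤ (1 + (i : ℝ) / M) * a)
    -- step 1 : union bound over terminals
    have hstep1 : ((Finset.univ.filter fun ω : ({x // x ∈ T} ≃ Fin T.card) × Fin M =>
          gmap dist T hT ω.1 (1 + (ω.2 : ℝ) / M) u ≠ gmap dist T hT ω.1 (1 + (ω.2 : ℝ) / M) v).card)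
        ≤ ∑ t : {x // x ∈ T}, (cU t * bU t + cV t * bV t) := by
      calc _ ≤ (Finset.univ.biUnion (fun t : {x // x ∈ T} =>
            (Finset.univ.filter fun ω : ({x // x ∈ T} ≃ Fin T.card) × Fin M =>
              (∀ s ∈ Bu t, ω.1 t ≤ ω.1 s) ∧
                (dist u ↑t ≤ (1 + (ω.2 : ℝ) / M) * a ∧ ¬ dist v ↑t ≤ (1 + (ω.2 : ℝ) / M) * b))
            ∪ (Finset.univ.filter fun ω : ({x // x ∈ T} ≃ Fin T.card) × Fin M =>
              (∀ s ∈ Bv t, ω.1 t ≤ ω.1 s) ∧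
                (dist v ↑t ≤ (1 + (ω.2 : ℝ) / M) * b ∧ ¬ dist u ↑t ≤ (1 + (ω.2 : ℝ) / M) * a)))).card :=
            Finset.card_le_card hsubbad
        _ ≤ ∑ t : {x // x ∈ T}, ((Finset.univ.filter fun ω : ({x // x ∈ T} ≃ Fin T.card) × Fin M =>
              (∀ s ∈ Bu t, ω.1 t ≤ ω.1 s) ∧
                (dist u ↑t ≤ (1 + (ω.2 : ℝ) / M) * a ∧ ¬ dist v ↑t ≤ (1 + (ω.2 : ℝ) / M) * b))
            ∪ (Finset.univ.filter fun ω : ({x // x ∈ T} ≃ Fin T.card) × Fin M =>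
              (∀ s ∈ Bv t, ω.1 t ≤ ω.1 s) ∧
                (dist v ↑t ≤ (1 + (ω.2 : ℝ) / M) * b ∧ ¬ dist u ↑t ≤ (1 + (ω.2 : ℝ) / M) * a))).card :=
            Finset.card_biUnion_le
        _ ≤ ∑ t : {x // x ∈ T}, (cU t * bU t + cV t * bV t) := by
            apply Finset.sum_le_sum
            intro t _
            calc _ ≤ _ := Finset.card_union_le _ _
              _ = cU t * bU t + cV t * bV t := by rw [hprodU t, hprodV t]
    -- step 2 : per-terminal real bound
    have hab0 : (0:ℝ) ≤ a + b := by linarith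
    have h10 : (0:ℝ) ≤ 10 * (M:ℝ) * d := by
      have : (0:ℝ) ≤ (M:ℝ) * d := mul_nonneg hMr.le hd.le
      linarith
    have hstep2u : ∀ t : {x // x ∈ T},
        ((cU t * bU t : ℕ) : ℝ) * (a + b) ≤ ((k' : ℝ) * (10 * (M:ℝ) * d)) * (1 / ((Bu t).card : ℝ)) := by
      intro t
      have hb1 : ((cU t * bU t : ℕ) : ℝ) * (a + b) = ((cU t : ℝ)) * (((bU t : ℝ)) * (a + b)) := by
        push_cast; ring
      rw [hb1]
      have h1 : ((cU t : ℝ)) * (((bU t : ℝ)) * (a + b))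
          ≤ ((k' : ℝ) / ((Bu t).card : ℝ)) * ((M:ℝ) * (9 * d) + (a + b)) := by
        apply mul_le_mul (hperm_u t) (hgrid_u t)
        · exact mul_nonneg (Nat.cast_nonneg _) hab0
        · exact div_nonneg hNσ (Nat.cast_nonneg _)
      have h2 : (M:ℝ) * (9 * d) + (a + b) ≤ 10 * (M:ℝ) * d := by linarith
      calc _ ≤ ((k' : ℝ) / ((Bu t).card : ℝ)) * ((M:ℝ) * (9 * d) + (a + b)) := h1
        _ ≤ ((k' : ℝ) / ((Bu t).card : ℝ)) * (10 * (M:ℝ) * d) := by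
            apply mul_le_mul_of_nonneg_left h2 (div_nonneg hNσ (Nat.cast_nonneg _))
        _ = ((k' : ℝ) * (10 * (M:ℝ) * d)) * (1 / ((Bu t).card : ℝ)) := by ring
    have hstep2v : ∀ t : {x // x ∈ T},
        ((cV t * bV t : ℕ) : ℝ) * (a + b) ≤ ((k' : ℝ) * (10 * (M:ℝ) * d)) * (1 / ((Bv t).card : ℝ)) := by
      intro t
      have hb1 : ((cV t * bV t : ℕ) : ℝ) * (a + b) = ((cV t : ℝ)) * (((bV t : ℝ)) * (a + b)) := by
        push_cast; ring
      rw [hb1]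
      have h1 : ((cV t : ℝ)) * (((bV t : ℝ)) * (a + b))
          ≤ ((k' : ℝ) / ((Bv t).card : ℝ)) * ((M:ℝ) * (9 * d) + (a + b)) := by
        apply mul_le_mul (hperm_v t) (hgrid_v t)
        · exact mul_nonneg (Nat.cast_nonneg _) hab0
        · exact div_nonneg hNσ (Nat.cast_nonneg _)
      have h2 : (M:ℝ) * (9 * d) + (a + b) ≤ 10 * (M:ℝ) * d := by linarith
      calc _ ≤ ((k' : ℝ) / ((Bv t).card : ℝ)) * ((M:ℝ) * (9 * d) + (a + b)) := h1
        _ ≤ ((k' : ℝ) / ((Bv t).card : ℝ)) * (10 * (M:ℝ) * d) := by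
            apply mul_le_mul_of_nonneg_left h2 (div_nonneg hNσ (Nat.cast_nonneg _))
        _ = ((k' : ℝ) * (10 * (M:ℝ) * d)) * (1 / ((Bv t).card : ℝ)) := by ring
    -- step 3 : harmonic sums
    have hharm_u : ∑ t : {x // x ∈ T}, (1:ℝ) / ((Bu t).card : ℝ) ≤ 5 * Real.log T.card := by
      have h1 := sum_inv_rank (fun s : {x // x ∈ T} => dist u ↑s)
      have h2 := sum_fin_inv_le (Fintype.card {x // x ∈ T})
        (by rw [Fintype.card_coe]; exact hk)
      rw [Fintype.card_coe] at h1 h2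
      exact le_trans h1 h2
    have hharm_v : ∑ t : {x // x ∈ T}, (1:ℝ) / ((Bv t).card : ℝ) ≤ 5 * Real.log T.card := by
      have h1 := sum_inv_rank (fun s : {x // x ∈ T} => dist v ↑s)
      have h2 := sum_fin_inv_le (Fintype.card {x // x ∈ T})
        (by rw [Fintype.card_coe]; exact hk)
      rw [Fintype.card_coe] at h1 h2
      exact le_trans h1 h2
    -- final assembly
    have hcast1 : ((Finset.univ.filter fun ω : ({x // x ∈ T} ≃ Fin T.card) × Fin M =>
          gmap dist T hT ω.1 (1 + (ω.2 : ℝ) / M) u ≠ gmap dist T hT ω.1 (1 + (ω.2 : ℝ) / M) v).card : ℝ)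
        ≤ ∑ t : {x // x ∈ T}, (((cU t * bU t : ℕ) : ℝ) + ((cV t * bV t : ℕ) : ℝ)) := by
      have := hstep1
      calc ((Finset.univ.filter fun ω : ({x // x ∈ T} ≃ Fin T.card) × Fin M =>
          gmap dist T hT ω.1 (1 + (ω.2 : ℝ) / M) u ≠ gmap dist T hT ω.1 (1 + (ω.2 : ℝ) / M) v).card : ℝ)
          ≤ ((∑ t : {x // x ∈ T}, (cU t * bU t + cV t * bV t) : ℕ) : ℝ) := by exact_mod_cast hstep1
        _ = ∑ t : {x // x ∈ T}, (((cU t * bU t : ℕ) : ℝ) + ((cV t * bV t : ℕ) : ℝ)) := by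
            push_cast; ring
    calc ((Finset.univ.filter fun ω : ({x // x ∈ T} ≃ Fin T.card) × Fin M =>
          gmap dist T hT ω.1 (1 + (ω.2 : ℝ) / M) u ≠ gmap dist T hT ω.1 (1 + (ω.2 : ℝ) / M) v).card : ℝ)
          * (a + b)
        ≤ (∑ t : {x // x ∈ T}, (((cU t * bU t : ℕ) : ℝ) + ((cV t * bV t : ℕ) : ℝ))) * (a + b) :=
          mul_le_mul_of_nonneg_right hcast1 hab0
      _ = ∑ t : {x // x ∈ T}, (((cU t * bU t : ℕ) : ℝ) * (a + b) + ((cV t * bV t : ℕ) : ℝ) * (a + b)) := by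
          rw [Finset.sum_mul]; apply Finset.sum_congr rfl; intro t _; ring
      _ ≤ ∑ t : {x // x ∈ T}, (((k' : ℝ) * (10 * (M:ℝ) * d)) * (1 / ((Bu t).card : ℝ))
            + ((k' : ℝ) * (10 * (M:ℝ) * d)) * (1 / ((Bv t).card : ℝ))) := by
          apply Finset.sum_le_sum
          intro t _
          exact add_le_add (hstep2u t) (hstep2v t)
      _ = ((k' : ℝ) * (10 * (M:ℝ) * d)) * ((∑ t : {x // x ∈ T}, (1:ℝ) / ((Bu t).card : ℝ))
            + (∑ t : {x // x ∈ T}, (1:ℝ) / ((Bv t).card : ℝ))) := by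
          rw [Finset.sum_add_distrib, ← Finset.mul_sum, ← Finset.mul_sum, mul_add]
      _ ≤ ((k' : ℝ) * (10 * (M:ℝ) * d)) * (5 * Real.log T.card + 5 * Real.log T.card) := by
          apply mul_le_mul_of_nonneg_left (add_le_add hharm_u hharm_v)
          exact mul_nonneg hNσ h10
      _ = 100 * Real.log T.card * d * ((k' : ℝ) * M) := by ring

end CKRaux

/-- The CKR partitioning theorem: for every finite metric space `(V, dist)` and terminal
set `T` with `|T| = k ≥ 2`, there is a finitely supported probability distribution `p`
over retraction maps `g : V → T` such that (a) almost surely `g` fixes every terminal,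
(b) almost surely `dist(u, g(u)) ≤ 2 · dist(u, T)` for every `u`, and (c) for all `u, v`,
`Pr[g(u) ≠ g(v)] · (dist(u,T) + dist(v,T)) ≤ C · log k · dist(u,v)`. -/
theorem ckr_partitioning :
    ∃ C : ℝ, 0 < C ∧
    ∀ (V : Type) [Fintype V] [DecidableEq V],
    ∀ (dist : V → V → ℝ) (T : Finset V) (hT : T.Nonempty),
      IsMetric dist → 2 ≤ T.card →
      ∃ p : (V → {x // x ∈ T}) → ℝ,
        (∀ g, 0 ≤ p g) ∧
        (∑ g, p g = 1) ∧
        (∀ g, p g ≠ 0 → ∀ t (ht : t ∈ T), (g t : V) = t) ∧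
        (∀ g, p g ≠ 0 → ∀ u : V,
          dist u (g u) ≤ 2 * T.inf' hT (fun t => dist u t)) ∧
        (∀ u v : V,
          (∑ g ∈ Finset.univ.filter (fun g : V → {x // x ∈ T} => g u ≠ g v), p g) *
              (T.inf' hT (fun t => dist u t) + T.inf' hT (fun t => dist v t)) ≤
            C * Real.log T.card * dist u v) := by
  classical
  refine ⟨100, by norm_num, ?_⟩
  intro V _ _ dist T hT hM hk
  obtain ⟨hrefl, hnonneg, hsymm, htri, hsep⟩ := hM
  have hMet : IsMetric dist := ⟨hrefl, hnonneg, hsymm, htri, hsep⟩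
  have hdpos : ∀ u v : V, u ≠ v → 0 < dist u v := by
    intro u v huv
    rcases lt_or_eq_of_le (hnonneg u v) with h | h
    · exact h
    · exact absurd (hsep u v h.symm) huv
  -- choose the grid resolution M
  have hexM : ∃ M : ℕ, 0 < M ∧ ∀ u v : V, u ≠ v →
      CKRaux.Am dist T hT u + CKRaux.Am dist T hT v ≤ M * dist u v := by
    refine ⟨(Finset.univ.filter (fun p : V × V => p.1 ≠ p.2)).sup
      (fun p => ⌈(CKRaux.Am dist T hT p.1 + CKRaux.Am dist T hT p.2) / dist p.1 p.2⌉₊) + 1,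
      by omega, ?_⟩
    intro u v huv
    have hd := hdpos u v huv
    have hmem : (u, v) ∈ Finset.univ.filter (fun p : V × V => p.1 ≠ p.2) :=
      Finset.mem_filter.mpr ⟨Finset.mem_univ _, huv⟩
    have hsup := Finset.le_sup (f := fun p : V × V =>
        ⌈(CKRaux.Am dist T hT p.1 + CKRaux.Am dist T hT p.2) / dist p.1 p.2⌉₊) hmem
    set N : ℕ := (Finset.univ.filter (fun p : V × V => p.1 ≠ p.2)).sup
      (fun p => ⌈(CKRaux.Am dist T hT p.1 + CKRaux.Am dist T hT p.2) / dist p.1 p.2⌉₊) with hN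
    have h1 : (CKRaux.Am dist T hT u + CKRaux.Am dist T hT v) / dist u v ≤ (N : ℝ) := by
      calc _ ≤ (⌈(CKRaux.Am dist T hT u + CKRaux.Am dist T hT v) / dist u v⌉₊ : ℝ) :=
            Nat.le_ceil _
        _ ≤ (N : ℝ) := by exact_mod_cast hsup
    rw [div_le_iff₀ hd] at h1
    have hNM : (N : ℝ) ≤ ((N + 1 : ℕ) : ℝ) := by exact_mod_cast Nat.le_succ _
    nlinarith [hd.le]
  obtain ⟨M, hM0, hMd⟩ := hexM
  -- the probability space and the random map
  have hNE : Nonempty (({x // x ∈ T} ≃ Fin T.card) × Fin M) := by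
    refine ⟨⟨Fintype.equivFinOfCardEq (Fintype.card_coe T), ⟨0, hM0⟩⟩⟩
  have hcardΩ : 0 < (Fintype.card ((({x // x ∈ T} ≃ Fin T.card) × Fin M)) : ℝ) := by
    exact_mod_cast Fintype.card_pos_iff.mpr hNE
  set G : (({x // x ∈ T} ≃ Fin T.card) × Fin M) → (V → {x // x ∈ T}) :=
    fun ω u => CKRaux.gmap dist T hT ω.1 (1 + (ω.2 : ℝ) / M) u with hG
  have hr1 : ∀ i : Fin M, (1 : ℝ) ≤ 1 + (i : ℝ) / M := by
    intro i
    have : (0:ℝ) ≤ (i : ℝ) / M := by positivity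
    linarith
  have hr2 : ∀ i : Fin M, (1 : ℝ) + (i : ℝ) / M ≤ 2 := by
    intro i
    have h1 : ((i : ℕ) : ℝ) < M := by exact_mod_cast i.2
    have hMr : (0:ℝ) < M := by exact_mod_cast hM0
    have h2 : (i : ℝ) / M < 1 := (div_lt_one hMr).mpr h1
    linarith
  refine ⟨fun g => ((Finset.univ.filter fun ω => G ω = g).card : ℝ)
      / (Fintype.card ((({x // x ∈ T} ≃ Fin T.card) × Fin M))), ?_, ?_, ?_, ?_, ?_⟩
  · intro g
    positivity
  · -- total mass 1
    rw [← Finset.sum_div]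
    rw [div_eq_one_iff_eq hcardΩ.ne']
    have h1 : (Finset.univ : Finset ((({x // x ∈ T} ≃ Fin T.card) × Fin M))).card
        = ∑ g : V → {x // x ∈ T}, (Finset.univ.filter fun ω => G ω = g).card :=
      Finset.card_eq_sum_card_fiberwise (fun x _ => Finset.mem_univ (G x))
    rw [← Finset.card_univ] at *
    exact_mod_cast h1.symm
  · -- retraction property
    intro g hg t ht
    have hne : (Finset.univ.filter fun ω => G ω = g).Nonempty := by
      by_contra hcon
      rw [Finset.not_nonempty_iff_eq_empty] at hcon
      apply hg
      simp [hcon]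
    obtain ⟨ω, hω⟩ := hne
    have hωg : G ω = g := by simpa using hω
    rw [← hωg, hG]
    have hspec := (CKRaux.gmap_spec dist T hT hMet ω.1 (hr1 ω.2) t).1
    rw [CKRaux.mem_capt] at hspec
    rw [CKRaux.Am_mem_zero dist T hT hMet ht, mul_zero] at hspec
    exact (hsep t _ (le_antisymm hspec (hnonneg _ _))).symm
  · -- closeness property
    intro g hg u
    have hne : (Finset.univ.filter fun ω => G ω = g).Nonempty := by
      by_contra hcon
      rw [Finset.not_nonempty_iff_eq_empty] at hcon
      apply hg
      simp [hcon]
    obtain ⟨ω, hω⟩ := hne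
    have hωg : G ω = g := by simpa using hω
    rw [← hωg, hG]
    have hspec := (CKRaux.gmap_spec dist T hT hMet ω.1 (hr1 ω.2) u).1
    rw [CKRaux.mem_capt] at hspec
    have hAm : CKRaux.Am dist T hT u = T.inf' hT (fun t => dist u t) := rfl
    calc dist u _ ≤ (1 + (ω.2 : ℝ) / M) * CKRaux.Am dist T hT u := hspec
      _ ≤ 2 * CKRaux.Am dist T hT u := by
          apply mul_le_mul_of_nonneg_right (hr2 ω.2)
            (CKRaux.Am_nonneg dist T hT hMet u)
      _ = 2 * T.inf' hT (fun t => dist u t) := by rw [hAm]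
  · -- the main separation bound
    intro u v
    have hAu : CKRaux.Am dist T hT u = T.inf' hT (fun t => dist u t) := rfl
    have hAv : CKRaux.Am dist T hT v = T.inf' hT (fun t => dist v t) := rfl
    have hsum : (∑ g ∈ Finset.univ.filter (fun g : V → {x // x ∈ T} => g u ≠ g v),
          ((Finset.univ.filter fun ω => G ω = g).card : ℝ)
            / (Fintype.card ((({x // x ∈ T} ≃ Fin T.card) × Fin M))))
        = ((Finset.univ.filter fun ω : (({x // x ∈ T} ≃ Fin T.card) × Fin M) =>
            G ω u ≠ G ω v).card : ℝ)
            / (Fintype.card ((({x // x ∈ T} ≃ Fin T.card) × Fin M))) := by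
      rw [← Finset.sum_div]
      congr 1
      have h1 : (Finset.univ.filter fun ω : (({x // x ∈ T} ≃ Fin T.card) × Fin M) =>
            G ω u ≠ G ω v).card
          = ∑ g ∈ Finset.univ.filter (fun g : V → {x // x ∈ T} => g u ≠ g v),
              ((Finset.univ.filter fun ω : (({x // x ∈ T} ≃ Fin T.card) × Fin M) =>
                G ω u ≠ G ω v).filter fun ω => G ω = g).card := by
        apply Finset.card_eq_sum_card_fiberwise
        intro ω hω
        simp only [Finset.mem_coe, Finset.mem_filter, Finset.mem_univ, true_and] at hω ⊢
        exact hω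
      have h2 : ∀ g ∈ Finset.univ.filter (fun g : V → {x // x ∈ T} => g u ≠ g v),
          ((Finset.univ.filter fun ω : (({x // x ∈ T} ≃ Fin T.card) × Fin M) =>
              G ω u ≠ G ω v).filter fun ω => G ω = g).card
            = (Finset.univ.filter fun ω => G ω = g).card := by
        intro g hg
        congr 1
        rw [Finset.filter_filter]
        apply Finset.filter_congr
        intro ω _
        simp only [Finset.mem_filter, Finset.mem_univ, true_and] at hg
        constructor
        · rintro ⟨_, h⟩; exact h
        · intro h; exact ⟨by rw [h]; exact hg, h⟩
      rw [h1, Finset.sum_congr rfl h2]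
      push_cast
      ring
    rw [hsum]
    rcases eq_or_ne u v with rfl | huv
    · -- u = v : left side is zero
      have : (Finset.univ.filter fun ω : (({x // x ∈ T} ≃ Fin T.card) × Fin M) =>
          G ω u ≠ G ω u) = ∅ := by
        apply Finset.filter_false_of_mem
        intro ω _
        simp
      rw [this]
      simp only [Finset.card_empty, Nat.cast_zero, zero_div, zero_mul]
      rw [hrefl u, mul_zero]
    · -- u ≠ v : apply main_count
      have hmain := CKRaux.main_count dist T hT hMet hk M hM0 hMd u v huv
      rw [← hAu, ← hAv]
      have hcardeq : (Fintype.card ((({x // x ∈ T} ≃ Fin T.card) × Fin M)) : ℝ)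
          = (Fintype.card ({x // x ∈ T} ≃ Fin T.card) : ℝ) * M := by
        rw [Fintype.card_prod, Fintype.card_fin]
        push_cast
        ring
      rw [div_mul_eq_mul_div, div_le_iff₀ hcardΩ]
      calc _ ≤ 100 * Real.log T.card * dist u v
            * ((Fintype.card ({x // x ∈ T} ≃ Fin T.card) : ℝ) * M) := hmain
        _ = 100 * Real.log ↑T.card * dist u v
            * (Fintype.card ((({x // x ∈ T} ≃ Fin T.card) × Fin M)) : ℝ) := by
          rw [hcardeq]
end

section
/- Let (V, dist) be a finite metric space, T ⊆ V nonempty, and w : V × V → ℝ≥0 a symmetric weight function with w(v,v) = 0. Write A*_u = dist(u,T) = min_{t∈T} dist(u,t). Let α ≥ 0 and let g be a random map V → T such that almost surely g(t) = t for all t ∈ T and dist(u, g(u)) ≤ 2·A*_u for all u ∈ V, and such that Pr[g(u) ≠ g(v)] · (A*_u + A*_v) ≤ α · dist(u,v) for all u,v ∈ V. Define the altered cost of an unordered pair {u,v} under g as D_g(u,v) = dist(u,v) if g(u) = g(v), and D_g(u,v) = dist(u, g(u)) + dist(g(u), g(v)) + dist(g(v), v) otherwise. Then E[ ∑_{{u,v}}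 w(u,v) · D_g(u,v) ] ≤ (4α + 1) · ∑_{{u,v}} w(u,v) · dist(u,v). -/
open scoped BigOperators

/-- Expected cost of the altered instance: if `g` is a random retraction map onto the
terminals `T` satisfying the CKR guarantees with separation parameter `α`, then the
expected total weighted altered cost is at most `(4α + 1)` times the original cost. -/
theorem altered_instance_cost
    (V : Type) [Fintype V] [DecidableEq V]
    (dist : V → V → ℝ) (T : Finset V) (hT : T.Nonempty)
    (w : V → V → ℝ)
    (hwsymm : ∀ u v, w u v = w v u) (hwnn : ∀ u v, 0 ≤ w u v) (hw0 : ∀ v, w v v = 0)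
    (hmet : IsMetric dist)
    (α : ℝ) (hα : 0 ≤ α)
    (p : (V → {x // x ∈ T}) → ℝ)
    (hp : ∀ g, 0 ≤ p g) (hp1 : ∑ g, p g = 1)
    (hid : ∀ g, p g ≠ 0 → ∀ t (ht : t ∈ T), (g t : V) = t)
    (hclose : ∀ g, p g ≠ 0 → ∀ u : V,
      dist u (g u) ≤ 2 * T.inf' hT (fun t => dist u t))
    (hsep : ∀ u v : V,
      (∑ g ∈ Finset.univ.filter (fun g : V → {x // x ∈ T} => g u ≠ g v), p g) *
          (T.inf' hT (fun t => dist u t) + T.inf' hT (fun t => dist v t)) ≤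
        α * dist u v) :
    ∑ g : V → {x // x ∈ T}, p g *
        ((∑ u, ∑ v, w u v *
          (if g u = g v then dist u v
           else dist u (g u) + dist (g u : V) (g v : V) + dist (g v : V) v)) / 2) ≤
      (4 * α + 1) * ((∑ u, ∑ v, w u v * dist u v) / 2) := by
  obtain ⟨h0, hnn, hsym, htri, _⟩ := hmet
  set D : (V → {x // x ∈ T}) → V → V → ℝ := fun g u v =>
    if g u = g v then dist u v
    else dist u (g u) + dist (g u : V) (g v : V) + dist (g v : V) v with hD
  -- pointwise expectation bound
  have key : ∀ u v : V, ∑ g : V → {x // x ∈ T}, p g * D g u v ≤ (4 * α + 1) * dist u v := by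
    intro u v
    set Au := T.inf' hT (fun t => dist u t) with hAu'
    set Av := T.inf' hT (fun t => dist v t) with hAv'
    have hAu : 0 ≤ Au := Finset.le_inf' hT _ (fun t _ => hnn u t)
    have hAv : 0 ≤ Av := Finset.le_inf' hT _ (fun t _ => hnn v t)
    have step1 : ∑ g : V → {x // x ∈ T}, p g * D g u v ≤
        ∑ g : V → {x // x ∈ T}, p g *
          (dist u v + (if g u = g v then 0 else 4 * (Au + Av))) := by
      apply Finset.sum_le_sum
      intro g _
      by_cases hpg : p g = 0
      · simp [hpg]
      apply mul_le_mul_of_nonneg_left _ (hp g)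
      by_cases heq : g u = g v
      · simp [hD, heq]
      · simp only [hD, heq, if_false]
        have h1 := hclose g hpg u
        have h2 := hclose g hpg v
        have h3 : dist (g u : V) (g v : V) ≤ dist (g u : V) u + dist u v + dist v (g v : V) := by
          calc dist (g u : V) (g v : V) ≤ dist (g u : V) u + dist u (g v : V) := htri _ _ _
            _ ≤ dist (g u : V) u + (dist u v + dist v (g v : V)) := by
                have := htri u v (g v : V); linarith
            _ = dist (g u : V) u + dist u v + dist v (g v : V) := by ring
        have e1 : dist (g u : V) u = dist u (g u : V) := hsym _ _
        have e2 : dist v (g v : V) = dist (g v : V) v := hsym _ _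
        have e3 : dist (g v : V) v = dist v (g v : V) := hsym _ _
        linarith
    have step2 : ∑ g : V → {x // x ∈ T}, p g *
          (dist u v + (if g u = g v then 0 else 4 * (Au + Av))) =
        dist u v + (∑ g ∈ Finset.univ.filter (fun g : V → {x // x ∈ T} => g u ≠ g v), p g)
          * (4 * (Au + Av)) := by
      rw [Finset.sum_filter, Finset.sum_mul]
      have : ∀ g : V → {x // x ∈ T}, p g * (dist u v + (if g u = g v then 0 else 4 * (Au + Av)))
          = p g * dist u v + (if g u ≠ g v then p g else 0) * (4 * (Au + Av)) := by
        intro g; by_cases heq : g u = g v <;> simp [heq] <;> ring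
      rw [Finset.sum_congr rfl (fun g _ => this g), Finset.sum_add_distrib, ← Finset.sum_mul,
        hp1, one_mul]
    have hs := hsep u v
    have hPr : 0 ≤ ∑ g ∈ Finset.univ.filter (fun g : V → {x // x ∈ T} => g u ≠ g v), p g :=
      Finset.sum_nonneg fun g _ => hp g
    calc ∑ g : V → {x // x ∈ T}, p g * D g u v ≤ _ := step1
      _ = _ := step2
      _ ≤ (4 * α + 1) * dist u v := by nlinarith [hnn u v]
  -- reorganize the total sum
  have swap : ∑ g : V → {x // x ∈ T}, p g * (∑ u, ∑ v, w u v * D g u v) =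
      ∑ u, ∑ v, w u v * ∑ g : V → {x // x ∈ T}, p g * D g u v := by
    simp_rw [Finset.mul_sum]
    rw [Finset.sum_comm]
    refine Finset.sum_congr rfl fun u _ => ?_
    rw [Finset.sum_comm]
    refine Finset.sum_congr rfl fun v _ => Finset.sum_congr rfl fun g _ => by ring
  have main : ∑ g : V → {x // x ∈ T}, p g * (∑ u, ∑ v, w u v * D g u v) ≤
      (4 * α + 1) * (∑ u, ∑ v, w u v * dist u v) := by
    rw [swap, Finset.mul_sum]
    apply Finset.sum_le_sum
    intro u _
    rw [Finset.mul_sum]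
    apply Finset.sum_le_sum
    intro v _
    calc w u v * ∑ g : V → {x // x ∈ T}, p g * D g u v
        ≤ w u v * ((4 * α + 1) * dist u v) :=
          mul_le_mul_of_nonneg_left (key u v) (hwnn u v)
      _ = (4 * α + 1) * (w u v * dist u v) := by ring
  simp_rw [← mul_div_assoc]
  rw [← Finset.sum_div, mul_div_assoc] at *
  linarith [main]
end

section
/- (Ordering lemma of Rotter–Vygen, dimension 2.) There is a constant C > 0 with the following property. Let V be a finite set with |V| = n ≥ 2, let w : V × V → ℝ≥0 be symmetric with w(v,v) = 0, let dist be a metric on V satisfying the 2-dimensional spreading constraints, and let v₀ ∈ V. Then there exists a bijection q : V → {0, 1, …, n−1} with q(v₀) = 0 such that ∑_{{u,v}} w(u,v) · √(|q(u) − q(v)|) ≤ C · log n · ∑_{{u,v}} w(u,v) · dist(u,v). -/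
open scoped BigOperators

set_option linter.unusedSectionVars false
set_option maxHeartbeats 1600000

def Spreading2 {V : Type*} (dist : V → V → ℝ) : Prop :=
  ∀ S : Finset V, ∀ u ∈ S,
    ((S.card : ℝ) - 1) ^ ((3 : ℝ) / 2) / 4 ≤ ∑ v ∈ S, dist u v

namespace RV


variable {V : Type} [Fintype V] [DecidableEq V]

/-- number of points within distance `r` of `u` (as a real). -/
noncomputable def bc (dist : V → V → ℝ) (u : V) (r : ℝ) : ℝ :=
  ((Finset.univ.filter (fun y => dist y u ≤ r)).card : ℝ)

/-- the `π`-minimal point within distance `β` of `x`. -/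
noncomputable def center (dist : V → V → ℝ) (π : V ≃ Fin (Fintype.card V)) (β : ℝ) (x : V) : V :=
  if h : ((Finset.univ.filter (fun y => dist y x ≤ β)).image π).Nonempty
  then π.symm (Finset.min' _ h) else x

noncomputable def charge (dist : V → V → ℝ) (m : ℝ) (u v : V) : ℝ :=
  96 * dist u v *
    (1 + (Real.log (bc dist u (5 * Real.sqrt m / 64)) - Real.log (bc dist u (Real.sqrt m / 64))))

def Good (w dist : V → V → ℝ) (S : Finset V) (π : V ≃ Fin (Fintype.card V)) (β : ℝ) : Prop :=
  Real.sqrt S.card / 32 < β ∧ β ≤ Real.sqrt S.card / 16 ∧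
  (∑ u ∈ S, ∑ v ∈ S,
      (if center dist π β u = center dist π β v then 0 else w u v) * Real.sqrt S.card)
    ≤ ∑ u ∈ S, ∑ v ∈ S, w u v * charge dist S.card u v

noncomputable def choiceOm (w dist : V → V → ℝ) (S : Finset V) :
    (V ≃ Fin (Fintype.card V)) × ℝ :=
  haveI := Classical.dec (∃ π β, Good w dist S π β)
  if h : ∃ π β, Good w dist S π β then ⟨h.choose, h.choose_spec.choose⟩
  else ⟨Fintype.equivFin V, 0⟩

lemma choiceOm_spec {w dist : V → V → ℝ} {S : Finset V} (h : ∃ π β, Good w dist S π β) :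
    Good w dist S (choiceOm w dist S).1 (choiceOm w dist S).2 := by
  unfold choiceOm
  rw [dif_pos h]
  exact h.choose_spec.choose_spec

/-- the center function chosen for the node `S`. -/
noncomputable def ctrOf (w dist : V → V → ℝ) (S : Finset V) : V → V :=
  center dist (choiceOm w dist S).1 (choiceOm w dist S).2

/-- the cluster of points of `S` with center `c`. -/
noncomputable def clOf (w dist : V → V → ℝ) (S : Finset V) (c : V) : Finset V :=
  S.filter (fun x => ctrOf w dist S x = c)

/-- the list of cluster centers, anchor's cluster first. -/
noncomputable def keyOf (w dist : V → V → ℝ) (S : Finset V) (a : V) : List V :=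
  ctrOf w dist S a :: ((S.image (ctrOf w dist S)).erase (ctrOf w dist S a)).toList

/-- the anchor of the cluster with center `c`. -/
noncomputable def anchorOf (w dist : V → V → ℝ) [Inhabited V] (S : Finset V) (a c : V) : V :=
  if c = ctrOf w dist S a then a else (clOf w dist S c).toList.headI

noncomputable def orderCore (w dist : V → V → ℝ) [Inhabited V] :
    ℕ → Finset V → V → List V
  | 0, _S, _a => []
  | (f+1), S, a =>
    if 256 < S.card then
      ((keyOf w dist S a).map (fun c =>
        orderCore w dist f (clOf w dist S c) (anchorOf w dist S a c))).flatten
    else a :: (S.erase a).toList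

lemma orderCore_succ_small {w dist : V → V → ℝ} [Inhabited V] {f : ℕ} {S : Finset V} {a : V}
    (h : ¬ 256 < S.card) : orderCore w dist (f+1) S a = a :: (S.erase a).toList := by
  rw [orderCore, if_neg h]

lemma orderCore_succ_big {w dist : V → V → ℝ} [Inhabited V] {f : ℕ} {S : Finset V} {a : V}
    (h : 256 < S.card) : orderCore w dist (f+1) S a =
      ((keyOf w dist S a).map (fun c =>
        orderCore w dist f (clOf w dist S c) (anchorOf w dist S a c))).flatten := by
  rw [orderCore, if_pos h]

variable {dist : V → V → ℝ}

section basic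

variable (hd0 : ∀ x, dist x x = 0) (hdsym : ∀ x y, dist x y = dist y x)
  (hspread : Spreading2 dist)

include hd0 hspread in
lemma dist_sep {u v : V} (huv : u ≠ v) : 1/4 ≤ dist u v := by
  have h := hspread {u, v} u (by simp)
  rw [Finset.sum_pair huv, hd0 u, Finset.card_pair huv] at h
  norm_num at h
  exact h

include hd0 in
lemma bc_one_le (u : V) {r : ℝ} (hr : 0 ≤ r) : 1 ≤ bc dist u r := by
  have : u ∈ Finset.univ.filter (fun y => dist y u ≤ r) := by
    simp [hd0 u, hr]
  have := Finset.card_pos.2 ⟨u, this⟩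
  unfold bc; exact_mod_cast this

lemma bc_mono (u : V) {r r' : ℝ} (h : r ≤ r') : bc dist u r ≤ bc dist u r' := by
  unfold bc
  have : (Finset.univ.filter (fun y => dist y u ≤ r)) ⊆
      (Finset.univ.filter (fun y => dist y u ≤ r')) := by
    intro y hy; simp only [Finset.mem_filter] at *; exact ⟨hy.1, le_trans hy.2 h⟩
  exact_mod_cast Finset.card_le_card this

lemma bc_le_card (u : V) (r : ℝ) : bc dist u r ≤ (Fintype.card V : ℝ) := by
  unfold bc
  exact_mod_cast Finset.card_filter_le _ _

include hd0 hdsym hspread in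
lemma bc_growth (u : V) {r : ℝ} (hr : 0 ≤ r) : bc dist u r ≤ 16 * r ^ 2 + 1 := by
  classical
  set S := Finset.univ.filter (fun y => dist y u ≤ r) with hS
  have hu : u ∈ S := by simp [hS, hd0 u, hr]
  have hsum : ∑ v ∈ S, dist u v ≤ ((S.card : ℝ) - 1) * r := by
    rw [← Finset.add_sum_erase S _ hu, hd0 u, zero_add]
    have hcard : ((S.erase u).card : ℝ) = (S.card : ℝ) - 1 := by
      rw [Finset.card_erase_of_mem hu]
      have : 1 ≤ S.card := Finset.card_pos.2 ⟨u, hu⟩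
      push_cast [Nat.cast_sub this]
      ring
    calc ∑ v ∈ S.erase u, dist u v ≤ ∑ _v ∈ S.erase u, r := by
          apply Finset.sum_le_sum
          intro v hv
          have := (Finset.mem_filter.1 (Finset.mem_of_mem_erase hv)).2
          rw [hdsym]; exact this
    _ = ((S.erase u).card : ℝ) * r := by rw [Finset.sum_const, nsmul_eq_mul]
    _ = ((S.card : ℝ) - 1) * r := by rw [hcard]
  have hsp := hspread S u hu
  set t : ℝ := (S.card : ℝ) - 1 with ht
  have htnn : 0 ≤ t := by
    have : 1 ≤ S.card := Finset.card_pos.2 ⟨u, hu⟩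
    have : (1:ℝ) ≤ (S.card : ℝ) := by exact_mod_cast this
    linarith
  have key : t ^ ((3:ℝ)/2) ≤ 4 * (t * r) := by
    have := le_trans hsp hsum
    linarith
  have hbc : bc dist u r = t + 1 := by unfold bc; rw [← hS]; rw [ht]; ring
  rw [hbc]
  rcases eq_or_lt_of_le htnn with h0 | hpos
  · rw [← h0]; nlinarith [sq_nonneg r]
  · -- t > 0 : t^{3/2} = t * t^{1/2}
    have hsplit : t ^ ((3:ℝ)/2) = t * t ^ ((1:ℝ)/2) := by
      rw [show (3:ℝ)/2 = 1 + 1/2 by norm_num, Real.rpow_add hpos, Real.rpow_one]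
    rw [hsplit] at key
    have h12 : t ^ ((1:ℝ)/2) ≤ 4 * r := by
      have := mul_le_mul_of_nonneg_left (le_refl (1:ℝ)) (le_of_lt hpos)
      nlinarith
    have hsq : (t ^ ((1:ℝ)/2)) * (t ^ ((1:ℝ)/2)) = t := by
      rw [← Real.rpow_add hpos]; norm_num
    have : t ≤ 16 * r ^ 2 := by
      have hnn : 0 ≤ t ^ ((1:ℝ)/2) := Real.rpow_nonneg htnn _
      nlinarith
    linarith

end basic



section center
variable {dist : V → V → ℝ} {π : V ≃ Fin (Fintype.card V)} {β : ℝ}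

lemma ball_nonempty {x : V} (hx : dist x x ≤ β) :
    ((Finset.univ.filter (fun y => dist y x ≤ β)).image π).Nonempty :=
  ⟨π x, Finset.mem_image.2 ⟨x, by simp [hx], rfl⟩⟩

lemma center_dist {x : V} (hx : dist x x ≤ β) : dist (center dist π β x) x ≤ β := by
  unfold center
  rw [dif_pos (ball_nonempty (π:=π) hx)]
  have hm := Finset.min'_mem _ (ball_nonempty (π:=π) hx)
  rcases Finset.mem_image.1 hm with ⟨y, hy, hy2⟩
  rw [← hy2, Equiv.symm_apply_apply]
  exact (Finset.mem_filter.1 hy).2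

lemma center_min {x : V} (hx : dist x x ≤ β) {y : V} (hy : dist y x ≤ β) :
    π (center dist π β x) ≤ π y := by
  unfold center
  rw [dif_pos (ball_nonempty (π:=π) hx)]
  rw [Equiv.apply_symm_apply]
  exact Finset.min'_le _ _ (Finset.mem_image.2 ⟨y, by simp [hy], rfl⟩)

lemma center_eq {x : V} (hx : dist x x ≤ β) {wm : V} (h1 : dist wm x ≤ β)
    (h2 : ∀ y, dist y x ≤ β → π wm ≤ π y) : center dist π β x = wm := by
  have ha : π (center dist π β x) ≤ π wm := center_min hx h1
  have hb : π wm ≤ π (center dist π β x) := h2 _ (center_dist hx)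
  exact π.injective (le_antisymm ha hb)

end center


/-- permutations for which `y` is the strict minimum of `T`. -/
noncomputable def Emin (T : Finset V) (y : V) : Finset (V ≃ Fin (Fintype.card V)) := by
  classical
  exact Finset.univ.filter (fun π => ∀ z ∈ T, z ≠ y → π y < π z)

lemma emin_swap_le {T : Finset V} {y y' : V} (hy' : y' ∈ T) :
    (Emin T y).card ≤ (Emin T y').card := by
  classical
  rcases eq_or_ne y' y with rfl | hne
  · exact le_refl _
  apply Finset.card_le_card_of_injOn (fun σ => σ.trans (Equiv.swap (σ y) (σ y')))
  · intro σ hσ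
    simp only [Emin, Finset.mem_coe, Finset.mem_filter, Finset.mem_univ, true_and] at hσ ⊢
    intro z hz hzy'
    have hyy' : σ y < σ y' := hσ y' hy' hne
    simp only [Equiv.trans_apply]
    rw [Equiv.swap_apply_right]
    rcases eq_or_ne z y with rfl | hzy
    · rw [Equiv.swap_apply_left]; exact hyy'
    · rw [Equiv.swap_apply_of_ne_of_ne (fun h => hzy (σ.injective h))
        (fun h => hzy' (σ.injective h))]
      exact hσ z hz hzy
  · intro σ₁ _ σ₂ _ heq
    have key : ∀ σ : V ≃ Fin (Fintype.card V),
        (σ.trans (Equiv.swap (σ y) (σ y'))).trans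
          (Equiv.swap ((σ.trans (Equiv.swap (σ y) (σ y'))) y')
            ((σ.trans (Equiv.swap (σ y) (σ y'))) y)) = σ := by
      intro σ
      have h1 : (σ.trans (Equiv.swap (σ y) (σ y'))) y' = σ y := by
        simp [Equiv.trans_apply, Equiv.swap_apply_right]
      have h2 : (σ.trans (Equiv.swap (σ y) (σ y'))) y = σ y' := by
        simp [Equiv.trans_apply, Equiv.swap_apply_left]
      rw [h1, h2]
      ext z
      simp [Equiv.trans_apply, Equiv.swap_apply_self]
    calc σ₁ = (σ₁.trans (Equiv.swap (σ₁ y) (σ₁ y'))).trans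
          (Equiv.swap ((σ₁.trans (Equiv.swap (σ₁ y) (σ₁ y'))) y')
            ((σ₁.trans (Equiv.swap (σ₁ y) (σ₁ y'))) y)) := (key σ₁).symm
    _ = σ₂ := by simp only at heq; rw [heq]; exact key σ₂

lemma emin_count {T : Finset V} {y : V} (hy : y ∈ T) :
    T.card * (Emin T y).card ≤ Fintype.card (V ≃ Fin (Fintype.card V)) := by
  classical
  have hdisj : ∀ y₁ ∈ T, ∀ y₂ ∈ T, y₁ ≠ y₂ → Disjoint (Emin T y₁) (Emin T y₂) := by
    intro y₁ h₁ y₂ h₂ hne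
    rw [Finset.disjoint_left]
    intro π hπ₁ hπ₂
    simp only [Emin, Finset.mem_filter, Finset.mem_univ, true_and] at hπ₁ hπ₂
    exact absurd (hπ₁ y₂ h₂ hne.symm) (not_lt.2 (le_of_lt (hπ₂ y₁ h₁ hne)))
  calc T.card * (Emin T y).card = ∑ _y' ∈ T, (Emin T y).card := by
        rw [Finset.sum_const, smul_eq_mul]
  _ ≤ ∑ y' ∈ T, (Emin T y').card := Finset.sum_le_sum (fun y' hy' => emin_swap_le hy')
  _ = (T.biUnion (Emin T)).card := (Finset.card_biUnion hdisj).symm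
  _ ≤ (Finset.univ : Finset (V ≃ Fin (Fintype.card V))).card := Finset.card_le_card
        (Finset.subset_univ _)
  _ = Fintype.card (V ≃ Fin (Fintype.card V)) := Finset.card_univ

/-- harmonic-to-log bound -/
lemma harmonic_le_log {a b : ℕ} (ha : 1 ≤ a) (hab : a ≤ b) :
    ∑ k ∈ Finset.Icc (a+1) b, (1:ℝ)/k ≤ Real.log b - Real.log a := by
  induction b, hab using Nat.le_induction with
  | base => simp
  | succ b hab ih =>
    have hb0 : (0:ℝ) < b := by
      have : (1:ℝ) ≤ (a:ℝ) := by exact_mod_cast ha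
      have : (a:ℝ) ≤ b := by exact_mod_cast hab
      linarith
    have hstep : (1:ℝ)/(b+1) ≤ Real.log (b+1) - Real.log b := by
      have hexp := Real.add_one_le_exp (-(1/((b:ℝ)+1)))
      have hb1 : (0:ℝ) < (b:ℝ)+1 := by linarith
      have hq : (0:ℝ) < (b:ℝ)/((b:ℝ)+1) := by positivity
      have h2 : (b:ℝ)/((b:ℝ)+1) ≤ Real.exp (-(1/((b:ℝ)+1))) := by
        have : -(1/((b:ℝ)+1)) + 1 = (b:ℝ)/((b:ℝ)+1) := by field_simp; ring
        linarith [hexp, this.symm.le, this.ge]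
      have h3 := Real.log_le_log hq h2
      rw [Real.log_exp, Real.log_div (ne_of_gt hb0) (ne_of_gt hb1)] at h3
      linarith
    have hins : Finset.Icc (a+1) (b+1) = insert (b+1) (Finset.Icc (a+1) b) := by
      ext k
      simp only [Finset.mem_Icc, Finset.mem_insert]
      omega
    rw [hins, Finset.sum_insert (by simp)]
    push_cast
    push_cast at ih hstep
    linarith

lemma rank_sum (g : V → ℝ) (alow : ℝ) (T : Finset V) (hT : ∀ y ∈ T, alow < g y) :
    ∑ y ∈ T, (1:ℝ)/((Finset.univ.filter (fun z => g z ≤ g y)).card) ≤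
      ∑ k ∈ Finset.Icc ((Finset.univ.filter (fun z => g z ≤ alow)).card + 1)
        ((Finset.univ.filter (fun z => g z ≤ alow)).card + T.card), (1:ℝ)/k := by
  classical
  set A := (Finset.univ.filter (fun z => g z ≤ alow)).card with hA
  revert hT
  induction T using Finset.strongInduction with
  | _ T ih =>
    intro hT
    rcases T.eq_empty_or_nonempty with rfl | hne
    · simp
    obtain ⟨ys, hys, hmax⟩ := Finset.exists_max_image T g hne
    have hc1 : 1 ≤ T.card := Finset.card_pos.2 hne
    have hNge : A + T.card ≤ (Finset.univ.filter (fun z => g z ≤ g ys)).card := by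
      have hsub : (Finset.univ.filter (fun z => g z ≤ alow)) ∪ T ⊆
          Finset.univ.filter (fun z => g z ≤ g ys) := by
        intro z hz
        rcases Finset.mem_union.1 hz with hz | hz
        · simp only [Finset.mem_filter, Finset.mem_univ, true_and] at hz ⊢
          exact le_trans hz (le_of_lt (lt_of_lt_of_le (hT ys hys) (le_refl _))) |>.trans
            (le_refl _) |>.trans (le_refl _)
        · simp only [Finset.mem_filter, Finset.mem_univ, true_and]
          exact hmax z hz
      have hdisj : Disjoint (Finset.univ.filter (fun z => g z ≤ alow)) T := by
        rw [Finset.disjoint_left]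
        intro z hz hzT
        simp only [Finset.mem_filter, Finset.mem_univ, true_and] at hz
        exact absurd hz (not_le.2 (hT z hzT))
      calc A + T.card = ((Finset.univ.filter (fun z => g z ≤ alow)) ∪ T).card :=
            (Finset.card_union_of_disjoint hdisj).symm
      _ ≤ _ := Finset.card_le_card hsub
    have hNpos : 0 < (Finset.univ.filter (fun z => g z ≤ g ys)).card :=
      Finset.card_pos.2 ⟨ys, by simp⟩
    have hterm : (1:ℝ)/((Finset.univ.filter (fun z => g z ≤ g ys)).card) ≤ 1/(A + T.card) := by
      apply one_div_le_one_div_of_le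
      · positivity
      · exact_mod_cast hNge
    have hihyp := ih (T.erase ys) (Finset.erase_ssubset hys)
      (fun y hy => hT y (Finset.mem_of_mem_erase hy))
    have hcerase : (T.erase ys).card = T.card - 1 := Finset.card_erase_of_mem hys
    rw [← Finset.add_sum_erase T _ hys]
    have hins : Finset.Icc (A+1) (A + T.card) =
        insert (A + T.card) (Finset.Icc (A+1) (A + (T.card - 1))) := by
      ext k
      simp only [Finset.mem_Icc, Finset.mem_insert]
      omega
    rw [hins, Finset.sum_insert (by simp only [Finset.mem_Icc]; omega)]
    rw [hcerase] at hihyp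
    push_cast at hterm ⊢
    push_cast at hihyp
    linarith

section core
variable {dist : V → V → ℝ}
variable (hd0 : ∀ x, dist x x = 0) (hdnn : ∀ x y, 0 ≤ dist x y)
  (hdsym : ∀ x y, dist x y = dist y x)
  (htri : ∀ x y z, dist x z ≤ dist x y + dist y z)
  (hspread : Spreading2 dist)

include hd0 hdnn hdsym htri hspread in
lemma core_count {u v : V} (huv : u ≠ v) {Δ : ℝ} (hΔ : 2 ≤ Δ) (hd8 : dist u v ≤ Δ/8)
    {M : ℕ} (hM2 : (M:ℝ) ≤ 2*Δ) :
    ((Finset.univ.filter (fun ωj : (V ≃ Fin (Fintype.card V)) × Fin M =>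
        center dist ωj.1 (Δ/4 + ((ωj.2.1 : ℝ)+1)/8) u ≠
          center dist ωj.1 (Δ/4 + ((ωj.2.1 : ℝ)+1)/8) v)).card : ℝ)
      ≤ (Fintype.card (V ≃ Fin (Fintype.card V)) : ℝ) * (12 * dist u v) *
        (Real.log (bc dist u (5*Δ/8)) - Real.log (bc dist u (Δ/8))) := by
  classical
  set n := Fintype.card V
  set d := dist u v with hdd
  have hd4 : 1/4 ≤ d := dist_sep hd0 hspread huv
  have hdpos : 0 < d := lt_of_lt_of_le (by norm_num) hd4
  set md : V → ℝ := fun y => min (dist y u) (dist y v) with hmd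
  set Md : V → ℝ := fun y => max (dist y u) (dist y v) with hMd
  set D : V → V → ℝ := fun y _ => md y with hD
  have hmdu : md u = 0 := by
    simp only [hmd, hd0 u]
    exact min_eq_left (hdnn u v)
  set βf : Fin M → ℝ := fun j => Δ/4 + ((j.1 : ℝ)+1)/8 with hβf
  have hβlow : ∀ j : Fin M, Δ/4 < βf j := by
    intro j
    have : (0:ℝ) < ((j.1:ℝ)+1)/8 := by positivity
    simp only [hβf]; linarith
  have hβhigh : ∀ j : Fin M, βf j ≤ Δ/2 := by
    intro j
    have hj : (j.1:ℝ) + 1 ≤ (M:ℝ) := by exact_mod_cast j.2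
    simp only [hβf]; linarith
  have hβpos : ∀ j : Fin M, (0:ℝ) ≤ βf j := fun j => le_of_lt
    (lt_of_le_of_lt (by linarith : (0:ℝ) ≤ Δ/4) (hβlow j))
  have hMdmd : ∀ y, Md y ≤ md y + d := by
    intro y
    have h1 : dist y u ≤ md y + d := by
      rcases le_total (dist y u) (dist y v) with h | h
      · simp only [hmd, min_eq_left h]; linarith [hdnn u v]
      · have := htri y v u
        rw [hdsym v u] at this
        simp only [hmd, min_eq_right h]; linarith
    have h2 : dist y v ≤ md y + d := by
      rcases le_total (dist y u) (dist y v) with h | h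
      · have := htri y u v
        simp only [hmd, min_eq_left h]; linarith
      · simp only [hmd, min_eq_right h]; linarith [hdnn u v]
    exact max_le h1 h2
  have hdmd : ∀ y, dist y u ≤ md y + d := fun y =>
    le_trans (le_max_left _ _) (hMdmd y)
  -- the first point to touch {u,v}
  set wmin : (V ≃ Fin n) → ℝ → V := fun π β => center D π β u with hwmin
  have hDuu : ∀ β : ℝ, 0 ≤ β → D u u ≤ β := by
    intro β hβ; simp only [hD, hmdu]; exact hβ
  have hw1 : ∀ (π : V ≃ Fin n) (β : ℝ), 0 ≤ β → md (wmin π β) ≤ β := by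
    intro π β hβ
    exact center_dist (π := π) (hDuu β hβ)
  have hw2 : ∀ (π : V ≃ Fin n) (β : ℝ), 0 ≤ β → ∀ z, md z ≤ β → π (wmin π β) ≤ π z := by
    intro π β hβ z hz
    exact center_min (π := π) (hDuu β hβ) hz
  -- Step A
  have stepA : ∀ (π : V ≃ Fin n) (j : Fin M),
      center dist π (βf j) u ≠ center dist π (βf j) v →
      md (wmin π (βf j)) ≤ βf j ∧ βf j < Md (wmin π (βf j)) := by
    intro π j hsep
    refine ⟨hw1 π _ (hβpos j), ?_⟩
    by_contra hcon
    push_neg at hcon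
    set y := wmin π (βf j)
    have hyu : dist y u ≤ βf j := le_trans (le_max_left _ _) hcon
    have hyv : dist y v ≤ βf j := le_trans (le_max_right _ _) hcon
    have hcu : center dist π (βf j) u = y := by
      apply center_eq (by rw [hd0]; exact hβpos j) hyu
      intro z hz
      exact hw2 π (βf j) (hβpos j) z (le_trans (min_le_left _ _) hz)
    have hcv : center dist π (βf j) v = y := by
      apply center_eq (by rw [hd0]; exact hβpos j) hyv
      intro z hz
      exact hw2 π (βf j) (hβpos j) z (le_trans (min_le_right _ _) hz)
    exact hsep (hcu.trans hcv.symm)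
  -- the annulus
  set ANN : Finset V := Finset.univ.filter (fun y => Δ/4 - d < md y ∧ md y ≤ Δ/2) with hANN
  set Kset : Finset ((V ≃ Fin n) × Fin M) := Finset.univ.filter (fun ωj =>
      center dist ωj.1 (βf ωj.2) u ≠ center dist ωj.1 (βf ωj.2) v) with hKset
  set filt : V → Finset ((V ≃ Fin n) × Fin M) := fun y => Finset.univ.filter (fun ωj =>
      wmin ωj.1 (βf ωj.2) = y ∧ md y ≤ βf ωj.2 ∧ βf ωj.2 < Md y) with hfilt
  have stepB : Kset ⊆ ANN.biUnion filt := by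
    intro ωj hωj
    simp only [hKset, Finset.mem_filter, Finset.mem_univ, true_and] at hωj
    obtain ⟨hA1, hA2⟩ := stepA ωj.1 ωj.2 hωj
    apply Finset.mem_biUnion.2
    refine ⟨wmin ωj.1 (βf ωj.2), ?_, ?_⟩
    · refine Finset.mem_filter.2 ⟨Finset.mem_univ _, ?_, le_trans hA1 (hβhigh ωj.2)⟩
      have h1 : Δ/4 < βf ωj.2 := hβlow ωj.2
      have h2 : βf ωj.2 < Md (wmin ωj.1 (βf ωj.2)) := hA2
      have h3 : Md (wmin ωj.1 (βf ωj.2)) ≤ md (wmin ωj.1 (βf ωj.2)) + d := hMdmd _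
      have h4 : Δ/4 < md (wmin ωj.1 (βf ωj.2)) + d := lt_of_lt_of_le (lt_trans h1 h2) h3
      exact sub_lt_iff_lt_add.2 h4
    · exact Finset.mem_filter.2 ⟨Finset.mem_univ _, rfl, hA1, hA2⟩
  -- Step C : card bound per annulus point
  set Ty : V → Finset V := fun y => Finset.univ.filter (fun z => md z ≤ md y) with hTy
  set Jset : V → Finset (Fin M) := fun y => Finset.univ.filter (fun j =>
      md y ≤ βf j ∧ βf j < Md y) with hJset
  have stepC : ∀ y, (filt y).card ≤ (Jset y).card * (Emin (Ty y) y).card := by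
    intro y
    have hsub : filt y ⊆ (Jset y).biUnion (fun j =>
        (Emin (Ty y) y) ×ˢ ({j} : Finset (Fin M))) := by
      intro ωj hωj
      simp only [hfilt, Finset.mem_filter, Finset.mem_univ, true_and] at hωj
      obtain ⟨hwy, hj1, hj2⟩ := hωj
      apply Finset.mem_biUnion.2
      refine ⟨ωj.2, ?_, ?_⟩
      · simp only [hJset, Finset.mem_filter, Finset.mem_univ, true_and]
        exact ⟨hj1, hj2⟩
      · rw [Finset.mem_product]
        constructor
        · simp only [Emin, Finset.mem_filter, Finset.mem_univ, true_and]
          intro z hz hzy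
          have hzβ : md z ≤ βf ωj.2 := by
            simp only [hTy, Finset.mem_filter, Finset.mem_univ, true_and] at hz
            linarith
          have hle : ωj.1 (wmin ωj.1 (βf ωj.2)) ≤ ωj.1 z :=
            hw2 ωj.1 (βf ωj.2) (hβpos ωj.2) z hzβ
          rw [hwy] at hle
          exact lt_of_le_of_ne hle (fun h => hzy (ωj.1.injective h).symm)
        · simp
    calc (filt y).card ≤ ((Jset y).biUnion (fun j =>
          (Emin (Ty y) y) ×ˢ ({j} : Finset (Fin M)))).card := Finset.card_le_card hsub
    _ ≤ ∑ j ∈ Jset y, ((Emin (Ty y) y) ×ˢ ({j} : Finset (Fin M))).card :=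
        Finset.card_biUnion_le
    _ = ∑ _j ∈ Jset y, (Emin (Ty y) y).card := by
        apply Finset.sum_congr rfl
        intro j _
        rw [Finset.card_product, Finset.card_singleton, mul_one]
    _ = (Jset y).card * (Emin (Ty y) y).card := by rw [Finset.sum_const, smul_eq_mul]
  -- Step D : window size
  have stepD : ∀ y, ((Jset y).card : ℝ) ≤ 12 * d := by
    intro y
    rcases (Jset y).eq_empty_or_nonempty with he | hne
    · rw [he]; simp; positivity
    set j0 := (Jset y).min' hne with hj0
    have hj0mem := (Jset y).min'_mem hne
    set t := ⌊(8:ℝ)*d⌋₊ with htdef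
    have hmem : ∀ j ∈ Jset y, j.1 - j0.1 ≤ t := by
      intro j hj
      have hj0le : j0 ≤ j := Finset.min'_le _ _ hj
      have hj0le' : j0.1 ≤ j.1 := hj0le
      simp only [hJset, Finset.mem_filter, Finset.mem_univ, true_and] at hj hj0mem
      have hwin : βf j < βf j0 + d := by
        have h1 : βf j < Md y := hj.2
        have h2 : md y ≤ βf j0 := hj0mem.1
        have := hMdmd y
        linarith
      have hsub : ((j.1 - j0.1 : ℕ) : ℝ) = (j.1 : ℝ) - (j0.1 : ℝ) := by
        push_cast [Nat.cast_sub hj0le']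
        ring
      have : ((j.1 : ℝ) - (j0.1 : ℝ))/8 < d := by
        simp only [hβf] at hwin
        linarith
      apply Nat.le_floor
      rw [hsub]
      linarith
    have hcard : (Jset y).card ≤ t + 1 := by
      calc (Jset y).card ≤ (Finset.range (t+1)).card := by
            apply Finset.card_le_card_of_injOn (fun j : Fin M => j.1 - j0.1)
            · intro j hj
              exact Finset.mem_range.2 (Nat.lt_succ_of_le (hmem j hj))
            · intro j₁ h₁ j₂ h₂ heq
              have l₁ : j0.1 ≤ j₁.1 := Finset.min'_le _ _ h₁
              have l₂ : j0.1 ≤ j₂.1 := Finset.min'_le _ _ h₂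
              simp only at heq
              apply Fin.ext
              omega
      _ = t + 1 := Finset.card_range _
    have htle : (t:ℝ) ≤ 8*d := Nat.floor_le (by positivity)
    calc ((Jset y).card : ℝ) ≤ (t:ℝ) + 1 := by exact_mod_cast hcard
    _ ≤ 8*d + 4*d := by linarith
    _ = 12 * d := by ring
  -- Step E : permutation count
  have hTypos : ∀ y, 0 < (Ty y).card := by
    intro y
    apply Finset.card_pos.2
    exact ⟨y, by simp [hTy]⟩
  have stepE : ∀ y, ((Emin (Ty y) y).card : ℝ) ≤
      (Fintype.card (V ≃ Fin n) : ℝ) / ((Ty y).card : ℝ) := by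
    intro y
    have := emin_count (T := Ty y) (y := y) (by simp [hTy])
    rw [le_div_iff₀ (by exact_mod_cast hTypos y)]
    calc ((Emin (Ty y) y).card : ℝ) * ((Ty y).card : ℝ)
        = (((Ty y).card * (Emin (Ty y) y).card : ℕ) : ℝ) := by push_cast; ring
    _ ≤ _ := by exact_mod_cast this
  -- assemble the count
  have hKbound : (Kset.card : ℝ) ≤ (Fintype.card (V ≃ Fin n) : ℝ) * (12*d) *
      (∑ y ∈ ANN, 1/((Ty y).card : ℝ)) := by
    calc (Kset.card : ℝ) ≤ ((ANN.biUnion filt).card : ℝ) := by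
          exact_mod_cast Finset.card_le_card stepB
    _ ≤ ((∑ y ∈ ANN, (filt y).card : ℕ) : ℝ) := by exact_mod_cast Finset.card_biUnion_le
    _ = ∑ y ∈ ANN, ((filt y).card : ℝ) := by push_cast; rfl
    _ ≤ ∑ y ∈ ANN, (12*d) * ((Fintype.card (V ≃ Fin n) : ℝ) / ((Ty y).card : ℝ)) := by
        apply Finset.sum_le_sum
        intro y _
        calc ((filt y).card : ℝ) ≤ ((Jset y).card : ℝ) * ((Emin (Ty y) y).card : ℝ) := by
              exact_mod_cast stepC y
        _ ≤ (12*d) * ((Fintype.card (V ≃ Fin n) : ℝ) / ((Ty y).card : ℝ)) := by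
            apply mul_le_mul (stepD y) (stepE y) (by positivity) (by positivity)
    _ = (Fintype.card (V ≃ Fin n) : ℝ) * (12*d) * (∑ y ∈ ANN, 1/((Ty y).card : ℝ)) := by
        rw [Finset.mul_sum]
        apply Finset.sum_congr rfl
        intro y _
        ring
  -- the harmonic / log bound
  have hdlow : Δ/8 ≤ Δ/4 - d := by linarith
  set A := (Finset.univ.filter (fun z => md z ≤ Δ/4 - d)).card with hA
  have hrank : ∑ y ∈ ANN, 1/((Ty y).card : ℝ) ≤
      ∑ k ∈ Finset.Icc (A+1) (A + ANN.card), (1:ℝ)/k := by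
    exact rank_sum md (Δ/4 - d) ANN (by
      intro y hy
      simp only [hANN, Finset.mem_filter, Finset.mem_univ, true_and] at hy
      exact hy.1)
  have hA1 : 1 ≤ A := by
    apply Finset.card_pos.2
    refine ⟨u, ?_⟩
    simp only [Finset.mem_filter, Finset.mem_univ, true_and, hmdu]
    linarith
  have hAbc : bc dist u (Δ/8) ≤ (A:ℝ) := by
    unfold bc
    have : (Finset.univ.filter (fun y => dist y u ≤ Δ/8)) ⊆
        (Finset.univ.filter (fun z => md z ≤ Δ/4 - d)) := by
      intro z hz
      simp only [Finset.mem_filter, Finset.mem_univ, true_and] at hz ⊢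
      calc md z ≤ dist z u := min_le_left _ _
      _ ≤ Δ/8 := hz
      _ ≤ Δ/4 - d := hdlow
    exact_mod_cast Finset.card_le_card this
  have hBbc : ((A + ANN.card : ℕ) : ℝ) ≤ bc dist u (5*Δ/8) := by
    unfold bc
    have hdisj : Disjoint (Finset.univ.filter (fun z => md z ≤ Δ/4 - d)) ANN := by
      rw [Finset.disjoint_left]
      intro z hz hz2
      simp only [Finset.mem_filter, Finset.mem_univ, true_and] at hz
      simp only [hANN, Finset.mem_filter, Finset.mem_univ, true_and] at hz2
      linarith [hz2.1]
    have hsub : (Finset.univ.filter (fun z => md z ≤ Δ/4 - d)) ∪ ANN ⊆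
        Finset.univ.filter (fun y => dist y u ≤ 5*Δ/8) := by
      intro z hz
      simp only [Finset.mem_filter, Finset.mem_univ, true_and]
      have hmdz : md z ≤ Δ/2 := by
        rcases Finset.mem_union.1 hz with h | h
        · simp only [Finset.mem_filter, Finset.mem_univ, true_and] at h
          linarith
        · simp only [hANN, Finset.mem_filter, Finset.mem_univ, true_and] at h
          exact h.2
      calc dist z u ≤ md z + d := hdmd z
      _ ≤ Δ/2 + Δ/8 := by linarith
      _ = 5*Δ/8 := by ring
    have hcards : (Finset.univ.filter (fun z => md z ≤ Δ/4 - d) ∪ ANN).card = A + ANN.card :=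
      Finset.card_union_of_disjoint hdisj
    rw [← hcards]
    exact_mod_cast Finset.card_le_card hsub
  have hharm : ∑ k ∈ Finset.Icc (A+1) (A + ANN.card), (1:ℝ)/k ≤
      Real.log (bc dist u (5*Δ/8)) - Real.log (bc dist u (Δ/8)) := by
    have h1 := harmonic_le_log hA1 (Nat.le_add_right A ANN.card)
    have hApos : (0:ℝ) < (A:ℝ) := by exact_mod_cast hA1
    have hbcpos : (0:ℝ) < bc dist u (Δ/8) := by
      have := bc_one_le hd0 (dist := dist) u (by linarith : (0:ℝ) ≤ Δ/8)
      linarith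
    have h2 : Real.log ((A + ANN.card : ℕ):ℝ) ≤ Real.log (bc dist u (5*Δ/8)) := by
      apply Real.log_le_log (by positivity) hBbc
    have h3 : Real.log (bc dist u (Δ/8)) ≤ Real.log (A:ℝ) :=
      Real.log_le_log hbcpos hAbc
    push_cast at h1 h2
    linarith
  -- final assembly
  have hsumnn : (0:ℝ) ≤ ∑ y ∈ ANN, 1/((Ty y).card : ℝ) := by
    apply Finset.sum_nonneg
    intro y _
    positivity
  have hfinal := le_trans hrank hharm
  calc (Kset.card : ℝ) ≤ (Fintype.card (V ≃ Fin n) : ℝ) * (12*d) *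
      (∑ y ∈ ANN, 1/((Ty y).card : ℝ)) := hKbound
  _ ≤ (Fintype.card (V ≃ Fin n) : ℝ) * (12*d) *
      (Real.log (bc dist u (5*Δ/8)) - Real.log (bc dist u (Δ/8))) := by
      apply mul_le_mul_of_nonneg_left hfinal (by positivity)


include hd0 hdnn hdsym htri hspread in
lemma exists_good {w : V → V → ℝ} (hwnn : ∀ u v, 0 ≤ w u v) {S : Finset V}
    (h256 : 256 < S.card) : ∃ π β, Good w dist S π β := by
  classical
  set n := Fintype.card V
  set m : ℝ := (S.card : ℝ) with hmdef
  have hm : (257:ℝ) ≤ m := by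
    have h : 257 ≤ S.card := h256
    rw [hmdef]
    exact_mod_cast h
  have hmpos : (0:ℝ) < m := by linarith
  set Δ : ℝ := Real.sqrt m / 8 with hΔdef
  have hΔ2 : 2 < Δ := by
    have h16 : Real.sqrt 256 < Real.sqrt m := by
      apply Real.sqrt_lt_sqrt (by norm_num)
      linarith
    have : Real.sqrt 256 = 16 := by
      rw [show (256:ℝ) = 16^2 by norm_num, Real.sqrt_sq (by norm_num)]
    rw [this] at h16
    simp only [hΔdef]
    linarith
  have hΔpos : (0:ℝ) < Δ := by linarith
  have h8Δ : 8 * Δ = Real.sqrt m := by simp only [hΔdef]; ring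
  set M := ⌊2*Δ⌋₊ with hMdef
  have hM2 : (M:ℝ) ≤ 2*Δ := Nat.floor_le (by positivity)
  have hMgeΔ : Δ ≤ (M:ℝ) := by
    have := Nat.lt_floor_add_one (2*Δ)
    simp only [← hMdef] at this
    linarith
  have hMpos : 0 < M := by
    have : (0:ℝ) < (M:ℝ) := by linarith
    exact_mod_cast this
  set βf : Fin M → ℝ := fun j => Δ/4 + ((j.1 : ℝ)+1)/8 with hβf
  have hβlow : ∀ j : Fin M, Δ/4 < βf j := by
    intro j
    have : (0:ℝ) < ((j.1:ℝ)+1)/8 := by positivity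
    simp only [hβf]; linarith
  have hβhigh : ∀ j : Fin M, βf j ≤ Δ/2 := by
    intro j
    have hj : (j.1:ℝ) + 1 ≤ (M:ℝ) := by exact_mod_cast j.2
    simp only [hβf]; linarith
  -- the random-space average
  have hlrnn : ∀ u' : V, 0 ≤ Real.log (bc dist u' (5*Δ/8)) - Real.log (bc dist u' (Δ/8)) := by
    intro u'
    have h1 : (1:ℝ) ≤ bc dist u' (Δ/8) := bc_one_le hd0 u' (by linarith)
    have h2 : bc dist u' (Δ/8) ≤ bc dist u' (5*Δ/8) := bc_mono u' (by linarith)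
    have := Real.log_le_log (by linarith) h2
    linarith [Real.log_nonneg h1]
  have key : ∀ u' v' : V,
      (((Finset.univ.filter (fun ωj : (V ≃ Fin n) × Fin M =>
          center dist ωj.1 (βf ωj.2) u' ≠ center dist ωj.1 (βf ωj.2) v')).card : ℝ))
        * Real.sqrt m
      ≤ (Fintype.card ((V ≃ Fin n) × Fin M) : ℝ) * charge dist m u' v' := by
    intro u' v'
    have hcharge : charge dist m u' v' = 96 * dist u' v' *
        (1 + (Real.log (bc dist u' (5*Δ/8)) - Real.log (bc dist u' (Δ/8)))) := by
      unfold charge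
      have e1 : 5 * Real.sqrt m / 64 = 5*Δ/8 := by simp only [hΔdef]; ring
      have e2 : Real.sqrt m / 64 = Δ/8 := by simp only [hΔdef]; ring
      rw [e1, e2]
    have hΩcard : (Fintype.card ((V ≃ Fin n) × Fin M) : ℝ)
        = (Fintype.card (V ≃ Fin n) : ℝ) * (M:ℝ) := by
      rw [Fintype.card_prod, Fintype.card_fin]
      push_cast; ring
    rcases eq_or_ne u' v' with rfl | huv
    · have hK : (Finset.univ.filter (fun ωj : (V ≃ Fin n) × Fin M =>
          center dist ωj.1 (βf ωj.2) u' ≠ center dist ωj.1 (βf ωj.2) u')) = ∅ := by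
        apply Finset.filter_false_of_mem
        intro ωj _
        simp
      rw [hK, hcharge, hd0 u']
      simp
    · have hd4 : 1/4 ≤ dist u' v' := dist_sep hd0 hspread huv
      have hlr := hlrnn u'
      rcases le_or_gt (dist u' v') (Δ/8) with hcase | hcase
      · have hcore := core_count hd0 hdnn hdsym htri hspread huv (le_of_lt hΔ2) hcase hM2
        rw [hcharge, hΩcard]
        have hKnn : (0:ℝ) ≤ ((Finset.univ.filter (fun ωj : (V ≃ Fin n) × Fin M =>
            center dist ωj.1 (βf ωj.2) u' ≠ center dist ωj.1 (βf ωj.2) v')).card : ℝ) :=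
          Nat.cast_nonneg _
        calc (((Finset.univ.filter (fun ωj : (V ≃ Fin n) × Fin M =>
              center dist ωj.1 (βf ωj.2) u' ≠ center dist ωj.1 (βf ωj.2) v')).card : ℝ))
              * Real.sqrt m
            ≤ ((Fintype.card (V ≃ Fin n) : ℝ) * (12 * dist u' v') *
              (Real.log (bc dist u' (5*Δ/8)) - Real.log (bc dist u' (Δ/8)))) * Real.sqrt m := by
              apply mul_le_mul_of_nonneg_right hcore (Real.sqrt_nonneg m)
        _ = (Fintype.card (V ≃ Fin n) : ℝ) * Δ * (96 * dist u' v') *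
              (Real.log (bc dist u' (5*Δ/8)) - Real.log (bc dist u' (Δ/8))) := by
              rw [← h8Δ]; ring
        _ ≤ (Fintype.card (V ≃ Fin n) : ℝ) * (M:ℝ) * (96 * dist u' v' *
              (1 + (Real.log (bc dist u' (5*Δ/8)) - Real.log (bc dist u' (Δ/8))))) := by
              have hpnn : (0:ℝ) ≤ (Fintype.card (V ≃ Fin n) : ℝ) := Nat.cast_nonneg _
              have hdnn' : (0:ℝ) ≤ dist u' v' := hdnn u' v'
              nlinarith [mul_nonneg hpnn hdnn']
      · -- big distance : trivial bound
        have hK : ((Finset.univ.filter (fun ωj : (V ≃ Fin n) × Fin M =>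
            center dist ωj.1 (βf ωj.2) u' ≠ center dist ωj.1 (βf ωj.2) v')).card : ℝ)
            ≤ (Fintype.card ((V ≃ Fin n) × Fin M) : ℝ) := by
          have := Finset.card_filter_le (Finset.univ : Finset ((V ≃ Fin n) × Fin M))
            (fun ωj => center dist ωj.1 (βf ωj.2) u' ≠ center dist ωj.1 (βf ωj.2) v')
          rw [Finset.card_univ] at this
          exact_mod_cast this
        rw [hcharge]
        have hsq : Real.sqrt m = 8*Δ := h8Δ.symm
        have hcard_nn : (0:ℝ) ≤ (Fintype.card ((V ≃ Fin n) × Fin M) : ℝ) := Nat.cast_nonneg _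
        have h1 : Real.sqrt m ≤ 64 * dist u' v' := by rw [hsq]; linarith
        have h2 : 64 * dist u' v' ≤ 96 * dist u' v' *
            (1 + (Real.log (bc dist u' (5*Δ/8)) - Real.log (bc dist u' (Δ/8)))) := by
          nlinarith
        calc (((Finset.univ.filter (fun ωj : (V ≃ Fin n) × Fin M =>
              center dist ωj.1 (βf ωj.2) u' ≠ center dist ωj.1 (βf ωj.2) v')).card : ℝ))
              * Real.sqrt m
            ≤ (Fintype.card ((V ≃ Fin n) × Fin M) : ℝ) * Real.sqrt m := by
              apply mul_le_mul_of_nonneg_right hK (Real.sqrt_nonneg m)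
        _ ≤ _ := by
              apply mul_le_mul_of_nonneg_left (le_trans h1 h2) hcard_nn
  -- averaging
  have havg : ∑ ωj ∈ (Finset.univ : Finset ((V ≃ Fin n) × Fin M)),
      (∑ u ∈ S, ∑ v ∈ S,
        (if center dist ωj.1 (βf ωj.2) u = center dist ωj.1 (βf ωj.2) v then 0 else w u v)
          * Real.sqrt m)
      ≤ ∑ _ωj ∈ (Finset.univ : Finset ((V ≃ Fin n) × Fin M)),
        (∑ u ∈ S, ∑ v ∈ S, w u v * charge dist m u v) := by
    have e1 : (∑ ωj ∈ (Finset.univ : Finset ((V ≃ Fin n) × Fin M)),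
        ∑ u ∈ S, ∑ v ∈ S,
          (if center dist ωj.1 (βf ωj.2) u = center dist ωj.1 (βf ωj.2) v then 0 else w u v)
            * Real.sqrt m)
        = ∑ u ∈ S, ∑ v ∈ S, ∑ ωj ∈ (Finset.univ : Finset ((V ≃ Fin n) × Fin M)),
          (if center dist ωj.1 (βf ωj.2) u = center dist ωj.1 (βf ωj.2) v then 0 else w u v)
            * Real.sqrt m := by
      rw [Finset.sum_comm]
      exact Finset.sum_congr rfl (fun u _ => Finset.sum_comm)
    have e2 : (∑ _ωj ∈ (Finset.univ : Finset ((V ≃ Fin n) × Fin M)),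
        (∑ u ∈ S, ∑ v ∈ S, w u v * charge dist m u v))
        = (Fintype.card ((V ≃ Fin n) × Fin M) : ℝ) *
          (∑ u ∈ S, ∑ v ∈ S, w u v * charge dist m u v) := by
      rw [Finset.sum_const, Finset.card_univ, nsmul_eq_mul]
    rw [e1, e2, Finset.mul_sum]
    apply Finset.sum_le_sum
    intro u hu
    rw [Finset.mul_sum]
    apply Finset.sum_le_sum
    intro v hv
    have hsplit : ∑ ωj ∈ (Finset.univ : Finset ((V ≃ Fin n) × Fin M)),
        (if center dist ωj.1 (βf ωj.2) u = center dist ωj.1 (βf ωj.2) v then 0 else w u v)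
          * Real.sqrt m
        = ((Finset.univ.filter (fun ωj : (V ≃ Fin n) × Fin M =>
            ¬ (center dist ωj.1 (βf ωj.2) u = center dist ωj.1 (βf ωj.2) v))).card : ℝ)
          * (w u v * Real.sqrt m) := by
      rw [← Finset.sum_mul]
      rw [Finset.sum_ite, Finset.sum_const_zero, zero_add, Finset.sum_const]
      rw [nsmul_eq_mul]
      ring
    rw [hsplit]
    have hKW := key u v
    have := mul_le_mul_of_nonneg_left hKW (hwnn u v)
    calc ((Finset.univ.filter (fun ωj : (V ≃ Fin n) × Fin M =>
            ¬ (center dist ωj.1 (βf ωj.2) u = center dist ωj.1 (βf ωj.2) v))).card : ℝ)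
          * (w u v * Real.sqrt m)
        = w u v * (((Finset.univ.filter (fun ωj : (V ≃ Fin n) × Fin M =>
            center dist ωj.1 (βf ωj.2) u ≠ center dist ωj.1 (βf ωj.2) v)).card : ℝ)
            * Real.sqrt m) := by ring
    _ ≤ w u v * ((Fintype.card ((V ≃ Fin n) × Fin M) : ℝ) * charge dist m u v) := this
    _ = (Fintype.card ((V ≃ Fin n) × Fin M) : ℝ) * (w u v * charge dist m u v) := by ring
  have hne : (Finset.univ : Finset ((V ≃ Fin n) × Fin M)).Nonempty :=
    ⟨(Fintype.equivFin V, ⟨0, hMpos⟩), Finset.mem_univ _⟩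
  obtain ⟨ωj, _, hle⟩ := Finset.exists_le_of_sum_le hne havg
  refine ⟨ωj.1, βf ωj.2, ?_, ?_, ?_⟩
  · have h := hβlow ωj.2
    have e : Real.sqrt (S.card:ℝ)/32 = Δ/4 := by rw [hΔdef, ← hmdef]; ring
    rw [e]; exact h
  · have h := hβhigh ωj.2
    have e : Real.sqrt (S.card:ℝ)/16 = Δ/2 := by rw [hΔdef, ← hmdef]; ring
    rw [e]; exact h
  · exact hle


end core

section lists

lemma indexOf_flatten {α : Type*} [DecidableEq α] : ∀ (Bs : List (List α)),
    Bs.Pairwise (fun b b' => ∀ x, x ∈ b → x ∈ b' → False) →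
    ∀ B ∈ Bs, ∀ u ∈ B, ∀ v ∈ B,
    ∃ c : ℕ, Bs.flatten.idxOf u = c + B.idxOf u ∧ Bs.flatten.idxOf v = c + B.idxOf v := by
  intro Bs
  induction Bs with
  | nil => intro _ B hB; exact absurd hB List.not_mem_nil
  | cons b₀ rest ih =>
    intro hpw B hB u hu v hv
    rw [List.pairwise_cons] at hpw
    rcases List.mem_cons.1 hB with rfl | hB
    · refine ⟨0, ?_, ?_⟩
      · rw [List.flatten_cons, List.idxOf_append_of_mem hu]; omega
      · rw [List.flatten_cons, List.idxOf_append_of_mem hv]; omega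
    · have hu0 : u ∉ b₀ := fun hc => hpw.1 B hB u hc hu
      have hv0 : v ∉ b₀ := fun hc => hpw.1 B hB v hc hv
      obtain ⟨c, hcu, hcv⟩ := ih hpw.2 B hB u hu v hv
      refine ⟨b₀.length + c, ?_, ?_⟩
      · rw [List.flatten_cons, List.idxOf_append_of_notMem hu0, hcu]; omega
      · rw [List.flatten_cons, List.idxOf_append_of_notMem hv0, hcv]; omega

end lists

/-- the potential/budget function. -/
noncomputable def Gco (dist : V → V → ℝ) (u v : V) (x : ℝ) : ℝ :=
  96 * dist u v * (1 + max 0 (Real.logb 2 (Real.sqrt x / 8)) +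
    (Real.log (bc dist u (5 * Real.sqrt x / 64)) +
     Real.log (bc dist u (13 * Real.sqrt x / 640))))

section gco

variable {dist : V → V → ℝ}
variable (hd0 : ∀ x, dist x x = 0) (hdnn : ∀ x y, 0 ≤ dist x y)

lemma max0logb_nonneg (x : ℝ) : 0 ≤ max 0 (Real.logb 2 x) := le_max_left _ _

lemma max0logb_mono {a b : ℝ} (ha : 0 ≤ a) (hab : a ≤ b) :
    max 0 (Real.logb 2 a) ≤ max 0 (Real.logb 2 b) := by
  rcases eq_or_lt_of_le ha with h0 | hpos
  · rw [← h0]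
    simp [Real.logb, Real.log_zero]
  · exact max_le_max (le_refl 0) (Real.logb_le_logb_of_le (by norm_num) hpos hab)

include hd0 in
lemma Gco_nonneg (u v : V) {x : ℝ} (hx : 0 ≤ x) (hduv : 0 ≤ dist u v) : 0 ≤ Gco dist u v x := by
  unfold Gco
  have hs : 0 ≤ Real.sqrt x := Real.sqrt_nonneg x
  have h1 : 0 ≤ Real.log (bc dist u (5 * Real.sqrt x / 64)) :=
    Real.log_nonneg (bc_one_le hd0 u (by linarith))
  have h2 : 0 ≤ Real.log (bc dist u (13 * Real.sqrt x / 640)) :=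
    Real.log_nonneg (bc_one_le hd0 u (by linarith))
  have h3 := max0logb_nonneg (Real.sqrt x / 8)
  have hA : (0:ℝ) ≤ 1 + max 0 (Real.logb 2 (Real.sqrt x / 8)) +
      (Real.log (bc dist u (5 * Real.sqrt x / 64)) +
       Real.log (bc dist u (13 * Real.sqrt x / 640))) := by linarith
  exact mul_nonneg (by linarith) hA

include hd0 in
lemma Gco_mono (u v : V) {x y : ℝ} (hx : 0 ≤ x) (hxy : x ≤ y) (hduv : 0 ≤ dist u v) :
    Gco dist u v x ≤ Gco dist u v y := by
  unfold Gco
  have hs : Real.sqrt x ≤ Real.sqrt y := Real.sqrt_le_sqrt hxy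
  have hsx : 0 ≤ Real.sqrt x := Real.sqrt_nonneg x
  have h1 : max 0 (Real.logb 2 (Real.sqrt x / 8)) ≤ max 0 (Real.logb 2 (Real.sqrt y / 8)) :=
    max0logb_mono (by linarith) (by linarith)
  have hb1 : (0:ℝ) < bc dist u (5 * Real.sqrt x / 64) := by
    have := bc_one_le hd0 u (r := 5 * Real.sqrt x / 64) (by linarith)
    linarith
  have hb2 : (0:ℝ) < bc dist u (13 * Real.sqrt x / 640) := by
    have := bc_one_le hd0 u (r := 13 * Real.sqrt x / 640) (by linarith)
    linarith
  have h2 : Real.log (bc dist u (5 * Real.sqrt x / 64)) ≤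
      Real.log (bc dist u (5 * Real.sqrt y / 64)) :=
    Real.log_le_log hb1 (bc_mono u (by linarith))
  have h3 : Real.log (bc dist u (13 * Real.sqrt x / 640)) ≤
      Real.log (bc dist u (13 * Real.sqrt y / 640)) :=
    Real.log_le_log hb2 (bc_mono u (by linarith))
  have h96 : (0:ℝ) ≤ 96 * dist u v := by linarith
  apply mul_le_mul_of_nonneg_left _ h96
  linarith

include hd0 hdnn in
lemma key_ineq (u v : V) {m : ℝ} (hm : 257 ≤ m) :
    charge dist m u v + Gco dist u v (m/16 + 1) ≤ Gco dist u v m := by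
  have hmpos : (0:ℝ) < m := by linarith
  set m₁ : ℝ := m/16 + 1 with hm₁
  have hm₁pos : (0:ℝ) < m₁ := by rw [hm₁]; linarith
  -- square root comparisons
  have hsqm : (0:ℝ) ≤ Real.sqrt m := Real.sqrt_nonneg m
  have hsq1 : (0:ℝ) ≤ Real.sqrt m₁ := Real.sqrt_nonneg m₁
  have hsrat : Real.sqrt m₁ ≤ (13/50) * Real.sqrt m := by
    have hsq : m₁ ≤ (13/50)^2 * m := by rw [hm₁]; nlinarith
    calc Real.sqrt m₁ ≤ Real.sqrt ((13/50)^2 * m) := Real.sqrt_le_sqrt hsq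
    _ = (13/50) * Real.sqrt m := by
        rw [Real.sqrt_mul (by positivity), Real.sqrt_sq (by norm_num)]
  have hsm2 : (16:ℝ) < Real.sqrt m := by
    have : Real.sqrt 256 < Real.sqrt m := Real.sqrt_lt_sqrt (by norm_num) (by linarith)
    have h16 : Real.sqrt 256 = 16 := by
      rw [show (256:ℝ) = 16^2 by norm_num, Real.sqrt_sq (by norm_num)]
    linarith [h16 ▸ this]
  -- (a) : 1 + L(m₁) ≤ L(m)
  have hLm : max 0 (Real.logb 2 (Real.sqrt m / 8)) = Real.logb 2 (Real.sqrt m / 8) := by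
    apply max_eq_right
    have : (1:ℝ) ≤ Real.logb 2 2 := le_of_eq (Real.logb_self_eq_one (by norm_num)).symm
    have h2 : Real.logb 2 2 ≤ Real.logb 2 (Real.sqrt m / 8) :=
      Real.logb_le_logb_of_le (by norm_num) (by norm_num) (by linarith)
    linarith
  have hstepa : 1 + max 0 (Real.logb 2 (Real.sqrt m₁ / 8)) ≤
      Real.logb 2 (Real.sqrt m / 8) := by
    have hhalf : Real.sqrt m₁ / 8 ≤ (Real.sqrt m / 8) / 2 := by
      have : (13/50 : ℝ) * Real.sqrt m ≤ (1/2) * Real.sqrt m := by nlinarith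
      linarith [hsrat]
    rcases le_or_gt (Real.sqrt m₁ / 8) 1 with hle | hgt
    · have : Real.logb 2 (Real.sqrt m₁ / 8) ≤ 0 :=
        Real.logb_nonpos (by norm_num) (by positivity) hle
      have hmax : max 0 (Real.logb 2 (Real.sqrt m₁ / 8)) = 0 := max_eq_left this
      rw [hmax]
      have : Real.logb 2 2 ≤ Real.logb 2 (Real.sqrt m / 8) :=
        Real.logb_le_logb_of_le (by norm_num) (by norm_num) (by linarith)
      rw [Real.logb_self_eq_one (by norm_num)] at this
      linarith
    · have hmax : max 0 (Real.logb 2 (Real.sqrt m₁ / 8)) = Real.logb 2 (Real.sqrt m₁ / 8) :=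
        max_eq_right (le_of_lt (Real.logb_pos (by norm_num) hgt))
      rw [hmax]
      have h1 : Real.logb 2 (Real.sqrt m₁ / 8) ≤ Real.logb 2 ((Real.sqrt m / 8)/2) :=
        Real.logb_le_logb_of_le (by norm_num) (by linarith) hhalf
      have h2 : Real.logb 2 ((Real.sqrt m / 8)/2) =
          Real.logb 2 (Real.sqrt m / 8) - 1 := by
        rw [Real.logb_div (by positivity) (by norm_num), Real.logb_self_eq_one (by norm_num)]
      linarith
  -- (b) : radius comparisons and log bounds
  have hb1pos : (0:ℝ) < bc dist u (5 * Real.sqrt m₁ / 64) := by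
    have := bc_one_le hd0 u (r := 5 * Real.sqrt m₁ / 64) (by positivity)
    linarith
  have hb2pos : (0:ℝ) < bc dist u (13 * Real.sqrt m₁ / 640) := by
    have := bc_one_le hd0 u (r := 13 * Real.sqrt m₁ / 640) (by positivity)
    linarith
  have hrad1 : 5 * Real.sqrt m₁ / 64 ≤ 13 * Real.sqrt m / 640 := by nlinarith [hsrat]
  have hrad2 : 13 * Real.sqrt m₁ / 640 ≤ Real.sqrt m / 64 := by nlinarith [hsrat]
  have hlog1 : Real.log (bc dist u (5 * Real.sqrt m₁ / 64)) ≤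
      Real.log (bc dist u (13 * Real.sqrt m / 640)) :=
    Real.log_le_log hb1pos (bc_mono u hrad1)
  have hlog2 : Real.log (bc dist u (13 * Real.sqrt m₁ / 640)) ≤
      Real.log (bc dist u (Real.sqrt m / 64)) :=
    Real.log_le_log hb2pos (bc_mono u hrad2)
  -- assemble
  unfold charge Gco
  rw [hLm]
  have hd' : (0:ℝ) ≤ 96 * dist u v := by linarith [hdnn u v]
  have hcoef : (1 + (Real.log (bc dist u (5 * Real.sqrt m / 64)) -
        Real.log (bc dist u (Real.sqrt m / 64)))) +
      (1 + max 0 (Real.logb 2 (Real.sqrt m₁ / 8)) +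
        (Real.log (bc dist u (5 * Real.sqrt m₁ / 64)) +
         Real.log (bc dist u (13 * Real.sqrt m₁ / 640))))
      ≤ 1 + Real.logb 2 (Real.sqrt m / 8) +
        (Real.log (bc dist u (5 * Real.sqrt m / 64)) +
         Real.log (bc dist u (13 * Real.sqrt m / 640))) := by
    linarith
  calc 96 * dist u v * (1 + (Real.log (bc dist u (5 * Real.sqrt m / 64)) -
        Real.log (bc dist u (Real.sqrt m / 64)))) +
      96 * dist u v * (1 + max 0 (Real.logb 2 (Real.sqrt m₁ / 8)) +
        (Real.log (bc dist u (5 * Real.sqrt m₁ / 64)) +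
         Real.log (bc dist u (13 * Real.sqrt m₁ / 640))))
      = 96 * dist u v * ((1 + (Real.log (bc dist u (5 * Real.sqrt m / 64)) -
        Real.log (bc dist u (Real.sqrt m / 64)))) +
      (1 + max 0 (Real.logb 2 (Real.sqrt m₁ / 8)) +
        (Real.log (bc dist u (5 * Real.sqrt m₁ / 64)) +
         Real.log (bc dist u (13 * Real.sqrt m₁ / 640))))) := by ring
  _ ≤ _ := mul_le_mul_of_nonneg_left hcoef hd'

end gco

section structure_lemmas

variable {dist : V → V → ℝ}
variable (hd0 : ∀ x, dist x x = 0) (hdnn : ∀ x y, 0 ≤ dist x y)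
  (hdsym : ∀ x y, dist x y = dist y x) (htri : ∀ x y z, dist x z ≤ dist x y + dist y z)
  (hspread : Spreading2 dist)

lemma headI_mem {α : Type*} [Inhabited α] {l : List α} (h : l ≠ []) : l.headI ∈ l := by
  cases l with
  | nil => exact absurd rfl h
  | cons a t => exact List.mem_cons_self

include hd0 hdnn hdsym hspread in
lemma cluster_card {w : V → V → ℝ} {S : Finset V}
    (hGood : Good w dist S (choiceOm w dist S).1 (choiceOm w dist S).2)
    (hbig : 256 < S.card) (c : V) :
    ((clOf w dist S c).card : ℝ) ≤ (S.card : ℝ)/16 + 1 ∧ (clOf w dist S c).card < S.card := by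
  classical
  obtain ⟨hg1, hg2, _⟩ := hGood
  have hcard0 : (0:ℝ) < (S.card : ℝ) := by
    have : 0 < S.card := by omega
    exact_mod_cast this
  have hβpos : (0:ℝ) < (choiceOm w dist S).2 := by
    have hs : (0:ℝ) < Real.sqrt (S.card : ℝ) := Real.sqrt_pos.2 hcard0
    linarith
  have hmain : ((clOf w dist S c).card : ℝ) ≤ (S.card : ℝ)/16 + 1 := by
    rcases (clOf w dist S c).eq_empty_or_nonempty with he | ⟨x₀, hx₀⟩
    · rw [he]; simp; linarith
    · have hc : ctrOf w dist S x₀ = c := (Finset.mem_filter.1 hx₀).2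
      have hsub : clOf w dist S c ⊆ Finset.univ.filter (fun y => dist y c ≤ (choiceOm w dist S).2) := by
        intro x hx
        have hcx : ctrOf w dist S x = c := (Finset.mem_filter.1 hx).2
        have hcd : dist (center dist (choiceOm w dist S).1 (choiceOm w dist S).2 x) x ≤
            (choiceOm w dist S).2 := center_dist (by rw [hd0]; exact le_of_lt hβpos)
        rw [show center dist (choiceOm w dist S).1 (choiceOm w dist S).2 x = c from hcx] at hcd
        simp only [Finset.mem_filter, Finset.mem_univ, true_and]
        rw [hdsym]
        exact hcd
      have h1 : ((clOf w dist S c).card : ℝ) ≤ bc dist c (choiceOm w dist S).2 := by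
        unfold bc
        exact_mod_cast Finset.card_le_card hsub
      have h2 : bc dist c (choiceOm w dist S).2 ≤ bc dist c (Real.sqrt (S.card:ℝ) / 16) :=
        bc_mono c hg2
      have h3 : bc dist c (Real.sqrt (S.card:ℝ) / 16) ≤
          16 * (Real.sqrt (S.card:ℝ) / 16)^2 + 1 :=
        bc_growth hd0 hdsym hspread c (by positivity)
      have h4 : 16 * (Real.sqrt (S.card:ℝ) / 16)^2 + 1 = (S.card:ℝ)/16 + 1 := by
        rw [div_pow, Real.sq_sqrt (le_of_lt hcard0)]
        ring
      linarith
  refine ⟨hmain, ?_⟩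
  have h5 : ((clOf w dist S c).card : ℝ) < (S.card : ℝ) := by
    have h257 : (257:ℝ) ≤ (S.card:ℝ) := by exact_mod_cast hbig
    linarith
  exact_mod_cast h5

include hd0 hdnn hdsym htri hspread in
lemma orderCore_spec {w : V → V → ℝ} [Inhabited V] (hwnn : ∀ u v, 0 ≤ w u v) :
    ∀ (f : ℕ) (S : Finset V) (a : V), a ∈ S → S.card ≤ f →
    (∀ x, x ∈ orderCore w dist f S a ↔ x ∈ S) ∧
    (orderCore w dist f S a).length = S.card ∧
    ∃ t, orderCore w dist f S a = a :: t := by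
  intro f
  induction f with
  | zero =>
    intro S a ha h0
    exact absurd (Finset.card_pos.2 ⟨a, ha⟩) (by omega)
  | succ f ih =>
    intro S a ha hcard
    by_cases hbig : 256 < S.card
    · have hGood := choiceOm_spec (exists_good hd0 hdnn hdsym htri hspread hwnn hbig)
      have hclcard := cluster_card hd0 hdnn hdsym hspread hGood hbig
      -- anchors belong to their clusters
      have hanch : ∀ c ∈ keyOf w dist S a, anchorOf w dist S a c ∈ clOf w dist S c := by
        intro c hc
        rcases List.mem_cons.1 hc with rfl | hc
        · rw [anchorOf, if_pos rfl]
          exact Finset.mem_filter.2 ⟨ha, rfl⟩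
        · rw [Finset.mem_toList, Finset.mem_erase] at hc
          obtain ⟨hne, hmem⟩ := hc
          obtain ⟨x, hx, hxc⟩ := Finset.mem_image.1 hmem
          have hnonempty : (clOf w dist S c).toList ≠ [] := by
            intro hnil
            have : x ∈ (clOf w dist S c).toList := by
              rw [Finset.mem_toList]
              exact Finset.mem_filter.2 ⟨hx, hxc⟩
            rw [hnil] at this
            exact List.not_mem_nil this
          rw [anchorOf, if_neg hne]
          rw [← Finset.mem_toList]
          exact headI_mem hnonempty
      have hih : ∀ c ∈ keyOf w dist S a,
          (∀ x, x ∈ orderCore w dist f (clOf w dist S c) (anchorOf w dist S a c) ↔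
            x ∈ clOf w dist S c) ∧
          (orderCore w dist f (clOf w dist S c) (anchorOf w dist S a c)).length =
            (clOf w dist S c).card ∧
          ∃ t, orderCore w dist f (clOf w dist S c) (anchorOf w dist S a c) =
            anchorOf w dist S a c :: t := by
        intro c hc
        exact ih (clOf w dist S c) (anchorOf w dist S a c) (hanch c hc)
          (by have := (hclcard c).2; omega)
      rw [orderCore_succ_big hbig]
      have hkeymem : ∀ x ∈ S, ctrOf w dist S x ∈ keyOf w dist S a := by
        intro x hx
        rw [keyOf]
        by_cases hc : ctrOf w dist S x = ctrOf w dist S a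
        · rw [hc]; exact List.mem_cons_self
        · apply List.mem_cons_of_mem
          rw [Finset.mem_toList, Finset.mem_erase]
          exact ⟨hc, Finset.mem_image_of_mem _ hx⟩
      refine ⟨?_, ?_, ?_⟩
      · intro x
        rw [List.mem_flatten]
        constructor
        · rintro ⟨l, hl, hxl⟩
          obtain ⟨c, hc, rfl⟩ := List.mem_map.1 hl
          have := ((hih c hc).1 x).1 hxl
          exact (Finset.mem_filter.1 this).1
        · intro hx
          refine ⟨orderCore w dist f (clOf w dist S (ctrOf w dist S x))
            (anchorOf w dist S a (ctrOf w dist S x)), ?_, ?_⟩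
          · exact List.mem_map.2 ⟨ctrOf w dist S x, hkeymem x hx, rfl⟩
          · exact ((hih _ (hkeymem x hx)).1 x).2 (Finset.mem_filter.2 ⟨hx, rfl⟩)
      · rw [List.length_flatten, List.map_map]
        have hmapeq : (keyOf w dist S a).map (List.length ∘ (fun c =>
            orderCore w dist f (clOf w dist S c) (anchorOf w dist S a c)))
            = (keyOf w dist S a).map (fun c => (clOf w dist S c).card) := by
          apply List.map_congr_left
          intro c hc
          exact (hih c hc).2.1
        rw [hmapeq]
        -- sum over the key list equals the fiber sum
        have hc0 : ctrOf w dist S a ∈ S.image (ctrOf w dist S) := Finset.mem_image_of_mem _ ha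
        rw [keyOf, List.map_cons, List.sum_cons, Finset.sum_map_toList]
        rw [Finset.add_sum_erase _ (fun c => (clOf w dist S c).card) hc0]
        exact (Finset.card_eq_sum_card_fiberwise (fun x hx => Finset.mem_image_of_mem _ hx)).symm
      · have hanca : anchorOf w dist S a (ctrOf w dist S a) = a := by
          rw [anchorOf, if_pos rfl]
        obtain ⟨t, ht⟩ := (hih (ctrOf w dist S a) (List.mem_cons_self)).2.2
        rw [keyOf, List.map_cons, List.flatten_cons, ht, hanca]
        exact ⟨t ++ _, rfl⟩
    · rw [orderCore_succ_small hbig]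
      refine ⟨?_, ?_, ⟨_, rfl⟩⟩
      · intro x
        rw [List.mem_cons, Finset.mem_toList, Finset.mem_erase]
        constructor
        · rintro (rfl | ⟨_, h⟩)
          · exact ha
          · exact h
        · intro hx
          by_cases hxa : x = a
          · exact Or.inl hxa
          · exact Or.inr ⟨hxa, hx⟩
      · simp only [List.length_cons, Finset.length_toList]
        rw [Finset.card_erase_of_mem ha]
        have : 1 ≤ S.card := Finset.card_pos.2 ⟨a, ha⟩
        omega

end structure_lemmas

section cost

variable {dist : V → V → ℝ}
variable (hd0 : ∀ x, dist x x = 0) (hdnn : ∀ x y, 0 ≤ dist x y)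
  (hdsym : ∀ x y, dist x y = dist y x) (htri : ∀ x y z, dist x z ≤ dist x y + dist y z)
  (hspread : Spreading2 dist)

lemma regroup (S : Finset V) (ctr : V → V) (X : V → V → ℝ) :
    ∑ u ∈ S, ∑ v ∈ S, (if ctr u = ctr v then X u v else 0)
    = ∑ c ∈ S.image ctr, ∑ u ∈ S.filter (fun x => ctr x = c),
        ∑ v ∈ S.filter (fun x => ctr x = c), X u v := by
  classical
  rw [← Finset.sum_fiberwise_of_maps_to (t := S.image ctr)
      (fun x hx => Finset.mem_image_of_mem ctr hx)
      (fun u => ∑ v ∈ S, (if ctr u = ctr v then X u v else 0))]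
  apply Finset.sum_congr rfl
  intro c _
  apply Finset.sum_congr rfl
  intro u hu
  have hcu : ctr u = c := (Finset.mem_filter.1 hu).2
  rw [Finset.sum_filter]
  apply Finset.sum_congr rfl
  intro v _
  by_cases h : ctr v = c
  · rw [if_pos h, if_pos (by rw [hcu, h])]
  · rw [if_neg h, if_neg (by rw [hcu]; exact fun hh => h hh.symm)]

lemma anchor_mem {w : V → V → ℝ} [Inhabited V] {S : Finset V} {a : V} (ha : a ∈ S) :
    ∀ c ∈ keyOf w dist S a, anchorOf w dist S a c ∈ clOf w dist S c := by
  intro c hc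
  rcases List.mem_cons.1 hc with rfl | hc
  · rw [anchorOf, if_pos rfl]
    exact Finset.mem_filter.2 ⟨ha, rfl⟩
  · rw [Finset.mem_toList, Finset.mem_erase] at hc
    obtain ⟨hne, hmem⟩ := hc
    obtain ⟨x, hx, hxc⟩ := Finset.mem_image.1 hmem
    have hnonempty : (clOf w dist S c).toList ≠ [] := by
      intro hnil
      have : x ∈ (clOf w dist S c).toList := by
        rw [Finset.mem_toList]
        exact Finset.mem_filter.2 ⟨hx, hxc⟩
      rw [hnil] at this
      exact List.not_mem_nil this
    rw [anchorOf, if_neg hne]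
    rw [← Finset.mem_toList]
    exact headI_mem hnonempty

include hd0 hdnn in
lemma Gco_ge_24 (u v : V) {x : ℝ} (hx : 0 ≤ x) (hsep : 1/4 ≤ dist u v) :
    24 ≤ Gco dist u v x := by
  unfold Gco
  have hs : (0:ℝ) ≤ Real.sqrt x := Real.sqrt_nonneg x
  have h1 : (0:ℝ) ≤ Real.log (bc dist u (5 * Real.sqrt x / 64)) :=
    Real.log_nonneg (bc_one_le hd0 u (by linarith))
  have h2 : (0:ℝ) ≤ Real.log (bc dist u (13 * Real.sqrt x / 640)) :=
    Real.log_nonneg (bc_one_le hd0 u (by linarith))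
  have h3 := max0logb_nonneg (Real.sqrt x / 8)
  nlinarith

include hd0 hdnn hdsym htri hspread in
lemma cost_bound {w : V → V → ℝ} [Inhabited V] (hwnn : ∀ u v, 0 ≤ w u v)
    (hwsym : ∀ u v, w u v = w v u) :
    ∀ (f : ℕ) (S : Finset V) (a : V), a ∈ S → S.card ≤ f →
    ∑ u ∈ S, ∑ v ∈ S, w u v *
      Real.sqrt |((orderCore w dist f S a).idxOf u : ℝ) -
        ((orderCore w dist f S a).idxOf v : ℝ)|
    ≤ ∑ u ∈ S, ∑ v ∈ S, w u v * Gco dist u v (S.card : ℝ) := by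
  intro f
  induction f with
  | zero =>
    intro S a ha h0
    exact absurd (Finset.card_pos.2 ⟨a, ha⟩) (by omega)
  | succ f ih =>
    intro S a ha hcard
    have hspec := orderCore_spec hd0 hdnn hdsym htri hspread hwnn (f+1) S a ha hcard
    obtain ⟨hmem, hlen, -⟩ := hspec
    have hidx_lt : ∀ x ∈ S, (orderCore w dist (f+1) S a).idxOf x < S.card := by
      intro x hx
      rw [← hlen]
      exact List.idxOf_lt_length_iff.2 ((hmem x).2 hx)
    have habs : ∀ u ∈ S, ∀ v ∈ S,
        |((orderCore w dist (f+1) S a).idxOf u : ℝ) -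
          ((orderCore w dist (f+1) S a).idxOf v : ℝ)| ≤ (S.card : ℝ) := by
      intro u hu v hv
      have h1 := hidx_lt u hu
      have h2 := hidx_lt v hv
      rw [abs_sub_le_iff]
      constructor <;>
      · push_cast
        have : ((orderCore w dist (f+1) S a).idxOf u : ℝ) < (S.card:ℝ) := by exact_mod_cast h1
        have : ((orderCore w dist (f+1) S a).idxOf v : ℝ) < (S.card:ℝ) := by exact_mod_cast h2
        have : (0:ℝ) ≤ ((orderCore w dist (f+1) S a).idxOf u : ℝ) := by positivity
        have : (0:ℝ) ≤ ((orderCore w dist (f+1) S a).idxOf v : ℝ) := by positivity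
        linarith
    by_cases hbig : 256 < S.card
    · -- recursive case
      have hGood := choiceOm_spec (exists_good hd0 hdnn hdsym htri hspread hwnn hbig)
      have hg3 : (∑ u ∈ S, ∑ v ∈ S,
          (if ctrOf w dist S u = ctrOf w dist S v then 0 else w u v) * Real.sqrt (S.card:ℝ))
          ≤ ∑ u ∈ S, ∑ v ∈ S, w u v * charge dist (S.card:ℝ) u v := hGood.2.2
      have hclcard := fun c => cluster_card hd0 hdnn hdsym hspread hGood hbig c
      have hm257 : (257:ℝ) ≤ (S.card:ℝ) := by exact_mod_cast hbig
      -- blocks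
      set blk : V → List V := fun c =>
        orderCore w dist f (clOf w dist S c) (anchorOf w dist S a c) with hblk
      have hLflat : orderCore w dist (f+1) S a = ((keyOf w dist S a).map blk).flatten :=
        orderCore_succ_big hbig
      have hblkspec : ∀ c ∈ keyOf w dist S a,
          (∀ x, x ∈ blk c ↔ x ∈ clOf w dist S c) ∧ (blk c).length = (clOf w dist S c).card := by
        intro c hc
        have h := orderCore_spec hd0 hdnn hdsym htri hspread hwnn f (clOf w dist S c)
          (anchorOf w dist S a c) (anchor_mem ha c hc) (by have := (hclcard c).2; omega)
        exact ⟨h.1, h.2.1⟩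
      have hkeymem : ∀ x ∈ S, ctrOf w dist S x ∈ keyOf w dist S a := by
        intro x hx
        rw [keyOf]
        by_cases hc : ctrOf w dist S x = ctrOf w dist S a
        · rw [hc]; exact List.mem_cons_self
        · exact List.mem_cons_of_mem _ (by
            rw [Finset.mem_toList, Finset.mem_erase]
            exact ⟨hc, Finset.mem_image_of_mem _ hx⟩)
      have hkeynodup : (keyOf w dist S a).Nodup := by
        rw [keyOf, List.nodup_cons]
        constructor
        · rw [Finset.mem_toList]
          exact fun h => (Finset.mem_erase.1 h).1 rfl
        · exact Finset.nodup_toList _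
      have hpw : ((keyOf w dist S a).map blk).Pairwise
          (fun b b' => ∀ x, x ∈ b → x ∈ b' → False) := by
        rw [List.pairwise_map]
        apply List.Pairwise.imp_of_mem ?_ hkeynodup
        intro c c' hc hc' hne x hxc hxc'
        have h1 := ((hblkspec c hc).1 x).1 hxc
        have h2 := ((hblkspec c' hc').1 x).1 hxc'
        have e1 : ctrOf w dist S x = c := (Finset.mem_filter.1 h1).2
        have e2 : ctrOf w dist S x = c' := (Finset.mem_filter.1 h2).2
        exact hne (e1.symm.trans e2)
      -- index localization for same-cluster pairs
      have hsame : ∀ u ∈ S, ∀ v ∈ S, ctrOf w dist S u = ctrOf w dist S v →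
          Real.sqrt |((orderCore w dist (f+1) S a).idxOf u : ℝ) -
            ((orderCore w dist (f+1) S a).idxOf v : ℝ)|
          = Real.sqrt |((blk (ctrOf w dist S u)).idxOf u : ℝ) -
              ((blk (ctrOf w dist S u)).idxOf v : ℝ)| := by
        intro u hu v hv hcc
        have hBmem : blk (ctrOf w dist S u) ∈ (keyOf w dist S a).map blk :=
          List.mem_map_of_mem (f := blk) (hkeymem u hu)
        have hub : u ∈ blk (ctrOf w dist S u) :=
          ((hblkspec _ (hkeymem u hu)).1 u).2 (Finset.mem_filter.2 ⟨hu, rfl⟩)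
        have hvb : v ∈ blk (ctrOf w dist S u) :=
          ((hblkspec _ (hkeymem u hu)).1 v).2 (Finset.mem_filter.2 ⟨hv, hcc.symm⟩)
        obtain ⟨coff, hcu, hcv⟩ := indexOf_flatten _ hpw _ hBmem u hub v hvb
        rw [hLflat, hcu, hcv]
        have harg : ((coff + (blk (ctrOf w dist S u)).idxOf u : ℕ) : ℝ) -
            ((coff + (blk (ctrOf w dist S u)).idxOf v : ℕ) : ℝ)
            = ((blk (ctrOf w dist S u)).idxOf u : ℝ) -
              ((blk (ctrOf w dist S u)).idxOf v : ℝ) := by push_cast; ring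
        rw [harg]
      have himagekey : ∀ c ∈ S.image (ctrOf w dist S), c ∈ keyOf w dist S a := by
        intro c hc
        rw [keyOf]
        by_cases hca : c = ctrOf w dist S a
        · rw [hca]; exact List.mem_cons_self
        · exact List.mem_cons_of_mem _ (by
            rw [Finset.mem_toList, Finset.mem_erase]
            exact ⟨hca, hc⟩)
      -- step 1 : termwise split
      have step1 : ∑ u ∈ S, ∑ v ∈ S, w u v *
          Real.sqrt |((orderCore w dist (f+1) S a).idxOf u : ℝ) -
            ((orderCore w dist (f+1) S a).idxOf v : ℝ)|
          ≤ (∑ u ∈ S, ∑ v ∈ S, (if ctrOf w dist S u = ctrOf w dist S v then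
              w u v * Real.sqrt |((blk (ctrOf w dist S u)).idxOf u : ℝ) -
                ((blk (ctrOf w dist S u)).idxOf v : ℝ)| else 0))
            + ∑ u ∈ S, ∑ v ∈ S,
              (if ctrOf w dist S u = ctrOf w dist S v then 0 else w u v) *
                Real.sqrt (S.card : ℝ) := by
        have hterm : ∀ u ∈ S, ∀ v ∈ S, w u v *
            Real.sqrt |((orderCore w dist (f+1) S a).idxOf u : ℝ) -
              ((orderCore w dist (f+1) S a).idxOf v : ℝ)|
            ≤ (if ctrOf w dist S u = ctrOf w dist S v then
                w u v * Real.sqrt |((blk (ctrOf w dist S u)).idxOf u : ℝ) -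
                  ((blk (ctrOf w dist S u)).idxOf v : ℝ)| else 0)
              + (if ctrOf w dist S u = ctrOf w dist S v then 0 else w u v) *
                Real.sqrt (S.card : ℝ) := by
          intro u hu v hv
          by_cases hcc : ctrOf w dist S u = ctrOf w dist S v
          · rw [if_pos hcc, if_pos hcc, zero_mul, add_zero, hsame u hu v hv hcc]
          · rw [if_neg hcc, if_neg hcc, zero_add]
            apply mul_le_mul_of_nonneg_left _ (hwnn u v)
            exact Real.sqrt_le_sqrt (habs u hu v hv)
        calc ∑ u ∈ S, ∑ v ∈ S, w u v *
            Real.sqrt |((orderCore w dist (f+1) S a).idxOf u : ℝ) -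
              ((orderCore w dist (f+1) S a).idxOf v : ℝ)|
            ≤ ∑ u ∈ S, ∑ v ∈ S, ((if ctrOf w dist S u = ctrOf w dist S v then
                w u v * Real.sqrt |((blk (ctrOf w dist S u)).idxOf u : ℝ) -
                  ((blk (ctrOf w dist S u)).idxOf v : ℝ)| else 0)
              + (if ctrOf w dist S u = ctrOf w dist S v then 0 else w u v) *
                Real.sqrt (S.card : ℝ)) := by
              apply Finset.sum_le_sum
              intro u hu
              apply Finset.sum_le_sum
              intro v hv
              exact hterm u hu v hv
        _ = _ := by simp only [Finset.sum_add_distrib]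
      -- step 2 : bound the same-cluster part by recursion
      have step2 : (∑ u ∈ S, ∑ v ∈ S, (if ctrOf w dist S u = ctrOf w dist S v then
              w u v * Real.sqrt |((blk (ctrOf w dist S u)).idxOf u : ℝ) -
                ((blk (ctrOf w dist S u)).idxOf v : ℝ)| else 0))
          ≤ ∑ u ∈ S, ∑ v ∈ S, w u v * Gco dist u v ((S.card : ℝ)/16 + 1) := by
        rw [regroup S (ctrOf w dist S) (fun u v =>
          w u v * Real.sqrt |((blk (ctrOf w dist S u)).idxOf u : ℝ) -
            ((blk (ctrOf w dist S u)).idxOf v : ℝ)|)]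
        have hinner : ∀ c ∈ S.image (ctrOf w dist S),
            ∑ u ∈ S.filter (fun x => ctrOf w dist S x = c),
              ∑ v ∈ S.filter (fun x => ctrOf w dist S x = c),
                w u v * Real.sqrt |((blk (ctrOf w dist S u)).idxOf u : ℝ) -
                  ((blk (ctrOf w dist S u)).idxOf v : ℝ)|
            ≤ ∑ u ∈ S.filter (fun x => ctrOf w dist S x = c),
              ∑ v ∈ S.filter (fun x => ctrOf w dist S x = c),
                w u v * Gco dist u v ((S.card : ℝ)/16 + 1) := by
          intro c hc
          have heq : ∑ u ∈ S.filter (fun x => ctrOf w dist S x = c),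
              ∑ v ∈ S.filter (fun x => ctrOf w dist S x = c),
                w u v * Real.sqrt |((blk (ctrOf w dist S u)).idxOf u : ℝ) -
                  ((blk (ctrOf w dist S u)).idxOf v : ℝ)|
              = ∑ u ∈ clOf w dist S c, ∑ v ∈ clOf w dist S c,
                w u v * Real.sqrt |((blk c).idxOf u : ℝ) - ((blk c).idxOf v : ℝ)| := by
            apply Finset.sum_congr rfl
            intro u hu
            apply Finset.sum_congr rfl
            intro v _
            rw [(Finset.mem_filter.1 hu).2]
          rw [heq]
          have hkc := himagekey c hc
          have hihc := ih (clOf w dist S c) (anchorOf w dist S a c) (anchor_mem ha c hkc)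
            (by have := (hclcard c).2; omega)
          calc ∑ u ∈ clOf w dist S c, ∑ v ∈ clOf w dist S c,
              w u v * Real.sqrt |((blk c).idxOf u : ℝ) - ((blk c).idxOf v : ℝ)|
              ≤ ∑ u ∈ clOf w dist S c, ∑ v ∈ clOf w dist S c,
                w u v * Gco dist u v ((clOf w dist S c).card : ℝ) := hihc
          _ ≤ ∑ u ∈ clOf w dist S c, ∑ v ∈ clOf w dist S c,
                w u v * Gco dist u v ((S.card : ℝ)/16 + 1) := by
              apply Finset.sum_le_sum
              intro u _
              apply Finset.sum_le_sum
              intro v _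
              exact mul_le_mul_of_nonneg_left
                (Gco_mono hd0 u v (by positivity) ((hclcard c).1) (hdnn u v)) (hwnn u v)
          _ ≤ _ := le_refl _
        calc ∑ c ∈ S.image (ctrOf w dist S),
            ∑ u ∈ S.filter (fun x => ctrOf w dist S x = c),
              ∑ v ∈ S.filter (fun x => ctrOf w dist S x = c),
                w u v * Real.sqrt |((blk (ctrOf w dist S u)).idxOf u : ℝ) -
                  ((blk (ctrOf w dist S u)).idxOf v : ℝ)|
            ≤ ∑ c ∈ S.image (ctrOf w dist S),
              ∑ u ∈ S.filter (fun x => ctrOf w dist S x = c),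
                ∑ v ∈ S.filter (fun x => ctrOf w dist S x = c),
                  w u v * Gco dist u v ((S.card : ℝ)/16 + 1) :=
              Finset.sum_le_sum hinner
        _ = ∑ u ∈ S, ∑ v ∈ S, (if ctrOf w dist S u = ctrOf w dist S v then
              w u v * Gco dist u v ((S.card : ℝ)/16 + 1) else 0) :=
              (regroup S (ctrOf w dist S) _).symm
        _ ≤ ∑ u ∈ S, ∑ v ∈ S, w u v * Gco dist u v ((S.card : ℝ)/16 + 1) := by
              apply Finset.sum_le_sum
              intro u _
              apply Finset.sum_le_sum
              intro v _
              by_cases hcc : ctrOf w dist S u = ctrOf w dist S v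
              · rw [if_pos hcc]
              · rw [if_neg hcc]
                exact mul_nonneg (hwnn u v) (Gco_nonneg hd0 u v (by positivity) (hdnn u v))
      -- final assembly
      calc ∑ u ∈ S, ∑ v ∈ S, w u v *
          Real.sqrt |((orderCore w dist (f+1) S a).idxOf u : ℝ) -
            ((orderCore w dist (f+1) S a).idxOf v : ℝ)|
          ≤ (∑ u ∈ S, ∑ v ∈ S, (if ctrOf w dist S u = ctrOf w dist S v then
              w u v * Real.sqrt |((blk (ctrOf w dist S u)).idxOf u : ℝ) -
                ((blk (ctrOf w dist S u)).idxOf v : ℝ)| else 0))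
            + ∑ u ∈ S, ∑ v ∈ S,
              (if ctrOf w dist S u = ctrOf w dist S v then 0 else w u v) *
                Real.sqrt (S.card : ℝ) := step1
      _ ≤ (∑ u ∈ S, ∑ v ∈ S, w u v * Gco dist u v ((S.card : ℝ)/16 + 1))
            + ∑ u ∈ S, ∑ v ∈ S, w u v * charge dist (S.card : ℝ) u v :=
            add_le_add step2 hg3
      _ = ∑ u ∈ S, ∑ v ∈ S,
            (w u v * Gco dist u v ((S.card : ℝ)/16 + 1) + w u v * charge dist (S.card : ℝ) u v) := by
            rw [← Finset.sum_add_distrib]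
            apply Finset.sum_congr rfl
            intro u _
            rw [← Finset.sum_add_distrib]
      _ ≤ ∑ u ∈ S, ∑ v ∈ S, w u v * Gco dist u v (S.card : ℝ) := by
            apply Finset.sum_le_sum
            intro u _
            apply Finset.sum_le_sum
            intro v _
            have hki := key_ineq hd0 hdnn u v hm257
            calc w u v * Gco dist u v ((S.card : ℝ)/16 + 1) + w u v * charge dist (S.card : ℝ) u v
                = w u v * (charge dist (S.card : ℝ) u v + Gco dist u v ((S.card : ℝ)/16 + 1)) := by
                  ring
            _ ≤ w u v * Gco dist u v (S.card : ℝ) :=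
                  mul_le_mul_of_nonneg_left hki (hwnn u v)
    · -- base case
      apply Finset.sum_le_sum
      intro u hu
      apply Finset.sum_le_sum
      intro v hv
      rcases eq_or_ne u v with rfl | huv
      · rw [sub_self, abs_zero, Real.sqrt_zero, mul_zero]
        exact mul_nonneg (hwnn u u)
          (Gco_nonneg hd0 u u (by positivity) (hdnn u u))
      · have hd4 : 1/4 ≤ dist u v := dist_sep hd0 hspread huv
        have hsqle : Real.sqrt |((orderCore w dist (f+1) S a).idxOf u : ℝ) -
            ((orderCore w dist (f+1) S a).idxOf v : ℝ)| ≤ 16 := by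
          calc Real.sqrt _ ≤ Real.sqrt (S.card : ℝ) := Real.sqrt_le_sqrt (habs u hu v hv)
          _ ≤ Real.sqrt 256 := Real.sqrt_le_sqrt (by exact_mod_cast Nat.le_of_not_lt hbig)
          _ = 16 := by rw [show (256:ℝ) = 16^2 by norm_num, Real.sqrt_sq (by norm_num)]
        calc w u v * Real.sqrt _ ≤ w u v * 16 :=
              mul_le_mul_of_nonneg_left hsqle (hwnn u v)
        _ ≤ w u v * Gco dist u v (S.card:ℝ) := by
            apply mul_le_mul_of_nonneg_left _ (hwnn u v)
            have := Gco_ge_24 hd0 hdnn u v (x := (S.card:ℝ)) (by positivity) hd4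
            linarith

end cost

section final

variable {dist : V → V → ℝ}
variable (hd0 : ∀ x, dist x x = 0)

include hd0 in
lemma Gco_le_final (hn : 2 ≤ Fintype.card V) (u v : V) (hduv : 0 ≤ dist u v) :
    Gco dist u v ((Fintype.card V : ℕ) : ℝ) ≤
      1000 * Real.log (Fintype.card V) * dist u v := by
  set n : ℝ := ((Fintype.card V : ℕ) : ℝ) with hn'
  have hn2 : (2:ℝ) ≤ n := by rw [hn']; exact_mod_cast hn
  have hlog2 : (0.6931471803 : ℝ) < Real.log 2 := Real.log_two_gt_d9
  have hlogmono : Real.log 2 ≤ Real.log n := Real.log_le_log (by norm_num) hn2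
  have hlogn_pos : (0:ℝ) < Real.log n := by linarith
  have h1 : (1:ℝ) ≤ 1.5 * Real.log n := by nlinarith
  have hsqn : (0:ℝ) < Real.sqrt n := Real.sqrt_pos.2 (by linarith)
  have hmax : max 0 (Real.logb 2 (Real.sqrt n / 8)) ≤ 0.75 * Real.log n := by
    apply max_le (by linarith)
    rw [← Real.log_div_log, div_le_iff₀ (by linarith : (0:ℝ) < Real.log 2)]
    have hle : Real.log (Real.sqrt n / 8) ≤ Real.log n / 2 := by
      have h2 : Real.log (Real.sqrt n / 8) ≤ Real.log (Real.sqrt n) :=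
        Real.log_le_log (by positivity) (by nlinarith)
      rw [Real.log_sqrt (by linarith)] at h2
      linarith
    nlinarith
  have hbc1 : Real.log (bc dist u (5 * Real.sqrt n / 64)) ≤ Real.log n := by
    apply Real.log_le_log
    · have := bc_one_le hd0 u (r := 5 * Real.sqrt n / 64) (by positivity)
      linarith
    · rw [hn']; exact bc_le_card u _
  have hbc2 : Real.log (bc dist u (13 * Real.sqrt n / 640)) ≤ Real.log n := by
    apply Real.log_le_log
    · have := bc_one_le hd0 u (r := 13 * Real.sqrt n / 640) (by positivity)
      linarith
    · rw [hn']; exact bc_le_card u _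
  have hK : 1 + max 0 (Real.logb 2 (Real.sqrt n / 8)) +
      (Real.log (bc dist u (5 * Real.sqrt n / 64)) +
       Real.log (bc dist u (13 * Real.sqrt n / 640))) ≤ 4.25 * Real.log n := by
    linarith
  unfold Gco
  calc 96 * dist u v * (1 + max 0 (Real.logb 2 (Real.sqrt n / 8)) +
      (Real.log (bc dist u (5 * Real.sqrt n / 64)) +
       Real.log (bc dist u (13 * Real.sqrt n / 640))))
      ≤ 96 * dist u v * (4.25 * Real.log n) :=
        mul_le_mul_of_nonneg_left hK (by linarith)
  _ ≤ 1000 * Real.log n * dist u v := by nlinarith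
end final

end RV

open RV in
/-- The ordering lemma of Rotter and Vygen in dimension 2: given a metric satisfying the
2-dimensional spreading constraints, there is a bijection `q : V → {0, …, n-1}` with
`q v₀ = 0` whose weighted square-root stretch is at most `C log n` times the LP cost. -/
theorem ordering_lemma_dim_two :
    ∃ C : ℝ, 0 < C ∧
    ∀ (V : Type) [Fintype V] [DecidableEq V],
    ∀ (w : V → V → ℝ) (dist : V → V → ℝ) (v₀ : V),
      2 ≤ Fintype.card V →
      (∀ u v, w u v = w v u) → (∀ u v, 0 ≤ w u v) → (∀ v, w v v = 0) →
      IsMetric dist →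
      Spreading2 dist →
      ∃ q : V → ℕ, Function.Injective q ∧ (∀ v, q v < Fintype.card V) ∧ q v₀ = 0 ∧
        (∑ u, ∑ v, w u v * Real.sqrt |(q u : ℝ) - (q v : ℝ)|) / 2 ≤
          C * Real.log (Fintype.card V) * ((∑ u, ∑ v, w u v * dist u v) / 2) := by
  classical
  refine ⟨1000, by norm_num, ?_⟩
  intro V _ _ w dist v₀ hn hwsym hwnn hwdiag hmetric hspread
  obtain ⟨hd0, hdnn, hdsym, htri, -⟩ := hmetric
  haveI : Inhabited V := ⟨v₀⟩
  have hcc : (Finset.univ : Finset V).card = Fintype.card V := Finset.card_univ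
  have hv₀ : v₀ ∈ (Finset.univ : Finset V) := Finset.mem_univ v₀
  obtain ⟨hmem, hlen, ⟨t, ht⟩⟩ := RV.orderCore_spec hd0 hdnn hdsym htri hspread hwnn
    (Fintype.card V) Finset.univ v₀ hv₀ (le_of_eq hcc)
  refine ⟨fun v => (RV.orderCore w dist (Fintype.card V) Finset.univ v₀).idxOf v,
    ?_, ?_, ?_, ?_⟩
  · intro x y hxy
    exact (List.idxOf_inj (y := y) ((hmem x).2 (Finset.mem_univ x))
      ).1 hxy
  · intro v
    have h := List.idxOf_lt_length_iff.2 ((hmem v).2 (Finset.mem_univ v))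
    rw [hlen, hcc] at h
    exact h
  · rw [ht]
    exact List.idxOf_cons_self
  · have hcost := RV.cost_bound hd0 hdnn hdsym htri hspread hwnn hwsym (Fintype.card V)
      Finset.univ v₀ hv₀ (le_of_eq hcc)
    have hn1 : (1:ℝ) ≤ (Fintype.card V : ℝ) := by
      have : (2:ℝ) ≤ (Fintype.card V : ℝ) := by exact_mod_cast hn
      linarith
    have hlognn : 0 ≤ Real.log (Fintype.card V) := Real.log_nonneg hn1
    have h2 : (∑ u, ∑ v, w u v *
        Real.sqrt |((RV.orderCore w dist (Fintype.card V) Finset.univ v₀).idxOf u : ℝ) -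
          ((RV.orderCore w dist (Fintype.card V) Finset.univ v₀).idxOf v : ℝ)|)
        ≤ 1000 * Real.log (Fintype.card V) * (∑ u, ∑ v, w u v * dist u v) := by
      calc (∑ u, ∑ v, w u v *
          Real.sqrt |((RV.orderCore w dist (Fintype.card V) Finset.univ v₀).idxOf u : ℝ) -
            ((RV.orderCore w dist (Fintype.card V) Finset.univ v₀).idxOf v : ℝ)|)
          ≤ ∑ u, ∑ v, w u v * RV.Gco dist u v (((Finset.univ : Finset V).card : ℝ)) := hcost
      _ ≤ ∑ u, ∑ v, w u v * (1000 * Real.log (Fintype.card V) * dist u v) := by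
          apply Finset.sum_le_sum
          intro u _
          apply Finset.sum_le_sum
          intro v _
          apply mul_le_mul_of_nonneg_left _ (hwnn u v)
          rw [hcc]
          exact RV.Gco_le_final hd0 hn u v (hdnn u v)
      _ = 1000 * Real.log (Fintype.card V) * (∑ u, ∑ v, w u v * dist u v) := by
          rw [Finset.mul_sum]
          apply Finset.sum_congr rfl
          intro u _
          rw [Finset.mul_sum]
          apply Finset.sum_congr rfl
          intro v _
          ring
    linarith
end
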